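/- arXiv:1604.06197 — 12 statements merged into one kernel-verified Lean document; each statement's English description precedes it below -/
import Mathlib

section
/- Let U be a finite set of vectors in ℝ³ that contains two nonzero orthogonal vectors u and v. Then there exists an orthogonal linear map Q of ℝ³ with Qw ≥ 0 for every w ∈ U if and only if there exists such an orthogonal map Q for which, in addition, Qu or Qv is a nonnegative scalar multiple of one of the standard basis vectors e₁, e₂, e₃. -/
open Matrix

lemma fin3_cover : ∀ i j : Fin 3, i ≠ j → ∀ m : Fin 3, m = i ∨ m = j ∨ m = -(i + j) := by
  decide

lemma aux_support (a b : Fin 3 → ℝ) (ha : 0 ≤ a) (hb : 0 ≤ b)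
    (ha0 : a ≠ 0) (hb0 : b ≠ 0) (h : ∀ m, a m = 0 ∨ b m = 0) :
    ∃ (i : Fin 3) (c : ℝ), 0 ≤ c ∧
      (a = c • (Pi.single i 1 : Fin 3 → ℝ) ∨ b = c • (Pi.single i 1 : Fin 3 → ℝ)) := by
  obtain ⟨i, hi⟩ := Function.ne_iff.mp ha0
  obtain ⟨j, hj⟩ := Function.ne_iff.mp hb0
  simp only [Pi.zero_apply] at hi hj
  have haj : a j = 0 := (h j).resolve_right hj
  have hbi : b i = 0 := (h i).resolve_left hi
  have hij : i ≠ j := by rintro rfl; exact hi haj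
  set k := -(i + j) with hk
  have hcover := fin3_cover i j hij
  rcases h k with hak | hbk
  · refine ⟨i, a i, le_of_lt ((ha i).lt_of_ne (Ne.symm hi)), Or.inl ?_⟩
    funext m
    have him : ∀ m, m ≠ i → (a i • (Pi.single i 1 : Fin 3 → ℝ)) m = 0 := by
      intro m hm
      simp [Pi.single_apply, Ne.symm hm]
    rcases hcover m with h | h | h <;> rw [h]
    · simp [Pi.single_apply]
    · rw [haj, him j (Ne.symm hij)]
    · by_cases hki : k = i
      · exact absurd (hki ▸ hak) hi
      · rw [hak, him k hki]
  · refine ⟨j, b j, le_of_lt ((hb j).lt_of_ne (Ne.symm hj)), Or.inr ?_⟩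
    funext m
    have hjm : ∀ m, m ≠ j → (b j • (Pi.single j 1 : Fin 3 → ℝ)) m = 0 := by
      intro m hm
      simp [Pi.single_apply, Ne.symm hm]
    rcases hcover m with h | h | h <;> rw [h]
    · rw [hbi, hjm i hij]
    · simp [Pi.single_apply]
    · by_cases hkj : k = j
      · exact absurd (hkj ▸ hbk) hj
      · rw [hbk, hjm k hkj]

theorem finiteness_condition_I
    (U : Finset (Fin 3 → ℝ)) (u v : Fin 3 → ℝ)
    (hu : u ∈ U) (hv : v ∈ U) (hu0 : u ≠ 0) (hv0 : v ≠ 0)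
    (horth : u ⬝ᵥ v = 0) :
    (∃ Q ∈ Matrix.orthogonalGroup (Fin 3) ℝ, ∀ w ∈ U, 0 ≤ Q.mulVec w) ↔
    (∃ Q ∈ Matrix.orthogonalGroup (Fin 3) ℝ, (∀ w ∈ U, 0 ≤ Q.mulVec w) ∧
      ∃ (i : Fin 3) (c : ℝ), 0 ≤ c ∧
        (Q.mulVec u = c • (Pi.single i 1 : Fin 3 → ℝ) ∨ Q.mulVec v = c • (Pi.single i 1 : Fin 3 → ℝ))) := by
  constructor
  · rintro ⟨Q, hQ, hpos⟩
    have hQ' : star Q * Q = 1 := (Matrix.mem_orthogonalGroup_iff' (Fin 3) ℝ).mp hQ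
    set a := Q.mulVec u with hadef
    set b := Q.mulVec v with hbdef
    -- Q injective on mulVec
    have hinj : ∀ w : Fin 3 → ℝ, Q.mulVec w = 0 → w = 0 := by
      intro w hw
      have : (star Q * Q).mulVec w = 0 := by
        rw [← Matrix.mulVec_mulVec, hw, Matrix.mulVec_zero]
      rwa [hQ', Matrix.one_mulVec] at this
    have ha0 : a ≠ 0 := fun h => hu0 (hinj u h)
    have hb0 : b ≠ 0 := fun h => hv0 (hinj v h)
    have ha : 0 ≤ a := hpos u hu
    have hb : 0 ≤ b := hpos v hv
    -- orthogonality preserved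
    have hQt : Qᵀ * Q = 1 := by
      simpa [Matrix.star_eq_conjTranspose, Matrix.conjTranspose_eq_transpose_of_trivial] using hQ'
    have hdot : a ⬝ᵥ b = 0 := by
      rw [hadef, hbdef, Matrix.dotProduct_mulVec, ← Matrix.mulVec_transpose,
        Matrix.mulVec_mulVec, hQt, Matrix.one_mulVec, horth]
    have hzero : ∀ m, a m = 0 ∨ b m = 0 := by
      intro m
      have hsum : ∀ m ∈ Finset.univ, a m * b m = 0 := by
        rw [← Finset.sum_eq_zero_iff_of_nonneg
          (fun m _ => mul_nonneg (ha m) (hb m))]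
        exact hdot
      exact mul_eq_zero.mp (hsum m (Finset.mem_univ m))
    obtain ⟨i, c, hc, hor⟩ := aux_support a b ha hb ha0 hb0 hzero
    exact ⟨Q, hQ, hpos, i, c, hc, hor⟩
  · rintro ⟨Q, hQ, hpos, _⟩
    exact ⟨Q, hQ, hpos⟩
end

section
/- Let U = {u₁, …, u_p} be a finite set of vectors in ℝ³. Then U is isometrically embeddable into ℝ³≥0 if and only if there exists a unit vector g ∈ ℝ³ such that for all i, j ∈ {1, …, p} one has ⟨u_i, u_j⟩ ≥ ⟨g, u_i⟩·⟨g, u_j⟩ ≥ 0. -/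
open Matrix

private lemma dot3 (a b : Fin 3 → ℝ) :
    a ⬝ᵥ b = a 0 * b 0 + a 1 * b 1 + a 2 * b 2 := by
  simp [dotProduct, Fin.sum_univ_three]

/-- cross product of `g` and `a` -/
private def cp (g a : Fin 3 → ℝ) : Fin 3 → ℝ :=
  ![g 1 * a 2 - g 2 * a 1, g 2 * a 0 - g 0 * a 2, g 0 * a 1 - g 1 * a 0]

private lemma cp_0 (g a : Fin 3 → ℝ) : cp g a 0 = g 1 * a 2 - g 2 * a 1 := rfl
private lemma cp_1 (g a : Fin 3 → ℝ) : cp g a 1 = g 2 * a 0 - g 0 * a 2 := rfl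
private lemma cp_2 (g a : Fin 3 → ℝ) : cp g a 2 = g 0 * a 1 - g 1 * a 0 := rfl

private lemma dpos {b : Fin 3 → ℝ} (hb0 : b ≠ 0) : 0 < b ⬝ᵥ b := by
  rcases lt_or_eq_of_le (by rw [dot3]; nlinarith [mul_self_nonneg (b 0), mul_self_nonneg (b 1), mul_self_nonneg (b 2)] : (0:ℝ) ≤ b ⬝ᵥ b) with h | h
  · exact h
  · exact absurd (dotProduct_self_eq_zero.mp h.symm) hb0

private lemma cp_skew (g a b : Fin 3 → ℝ) : cp g a ⬝ᵥ b = -(cp g b ⬝ᵥ a) := by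
  simp only [dot3, cp_0, cp_1, cp_2]; ring

private lemma trans3 (g a b c : Fin 3 → ℝ) (hb : g ⬝ᵥ b = 0)
    (hb0 : b ≠ 0) (hab : 0 ≤ a ⬝ᵥ b) (hbc : 0 ≤ b ⬝ᵥ c)
    (h1 : 0 ≤ cp g a ⬝ᵥ b) (h2 : 0 ≤ cp g b ⬝ᵥ c) : 0 ≤ cp g a ⬝ᵥ c := by
  have hbb : 0 < b ⬝ᵥ b := dpos hb0
  have key : (b ⬝ᵥ b) * (cp g a ⬝ᵥ c) = (cp g a ⬝ᵥ b) * (b ⬝ᵥ c) + (a ⬝ᵥ b) * (cp g b ⬝ᵥ c) := by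
    simp only [dot3, cp_0, cp_1, cp_2] at hb ⊢
    linear_combination (-1 : ℝ) * (a 0 * (b 1 * c 2 - b 2 * c 1) - a 1 * (b 0 * c 2 - b 2 * c 0)
      + a 2 * (b 0 * c 1 - b 1 * c 0)) * hb
  have h3 : 0 ≤ (b ⬝ᵥ b) * (cp g a ⬝ᵥ c) := by
    rw [key]; exact add_nonneg (mul_nonneg h1 hbc) (mul_nonneg hab h2)
  nlinarith [h3, hbb]

private lemma exists_bot {α : Type*} [DecidableEq α] (r : α → α → Prop) (s : Finset α) :
    (∀ a ∈ s, ∀ b ∈ s, r a b ∨ r b a) →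
    (∀ a ∈ s, ∀ b ∈ s, ∀ c ∈ s, r a b → r b c → r a c) →
    s.Nonempty → ∃ m ∈ s, ∀ i ∈ s, r m i := by
  classical
  induction s using Finset.induction_on with
  | empty => intro _ _ h; exact absurd h (by simp)
  | @insert x t hx ih =>
    intro htot htr _
    by_cases ht : t.Nonempty
    · obtain ⟨m, hm, hmin⟩ := ih
        (fun a ha b hb => htot a (Finset.mem_insert_of_mem ha) b (Finset.mem_insert_of_mem hb))
        (fun a ha b hb c hc => htr a (Finset.mem_insert_of_mem ha) b (Finset.mem_insert_of_mem hb)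
          c (Finset.mem_insert_of_mem hc)) ht
      have hxs : x ∈ insert x t := Finset.mem_insert_self x t
      have hms : m ∈ insert x t := Finset.mem_insert_of_mem hm
      rcases htot x hxs m hms with h | h
      · refine ⟨x, hxs, fun i hi => ?_⟩
        rcases Finset.mem_insert.mp hi with rfl | hi
        · rcases htot i hxs i hxs with h' | h' <;> exact h'
        · exact htr x hxs m hms i (Finset.mem_insert_of_mem hi) h (hmin i hi)
      · refine ⟨m, hms, fun i hi => ?_⟩
        rcases Finset.mem_insert.mp hi with rfl | hi
        · exact h
        · exact hmin i hi
    · refine ⟨x, Finset.mem_insert_self x t, fun i hi => ?_⟩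
      rcases Finset.mem_insert.mp hi with rfl | hi
      · have hxs := Finset.mem_insert_self i t
        rcases htot i hxs i hxs with h' | h' <;> exact h'
      · exact absurd ⟨i, hi⟩ ht

private lemma build (p : ℕ) (u : Fin p → (Fin 3 → ℝ)) (g a : Fin 3 → ℝ)
    (hg : g ⬝ᵥ g = 1) (ha0 : a ≠ 0) (hga : g ⬝ᵥ a = 0)
    (h1 : ∀ i, 0 ≤ a ⬝ᵥ u i) (h2 : ∀ i, 0 ≤ cp g a ⬝ᵥ u i) (h3 : ∀ i, 0 ≤ g ⬝ᵥ u i) :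
    ∃ Q ∈ Matrix.orthogonalGroup (Fin 3) ℝ, ∀ i, 0 ≤ Q.mulVec (u i) := by
  have haa : 0 < a ⬝ᵥ a := dpos ha0
  obtain ⟨r, hrpos, hr2⟩ : ∃ r : ℝ, 0 < r ∧ r * r * (a ⬝ᵥ a) = 1 := by
    refine ⟨(Real.sqrt (a ⬝ᵥ a))⁻¹, inv_pos.mpr (Real.sqrt_pos.mpr haa), ?_⟩
    have h : (Real.sqrt (a ⬝ᵥ a))⁻¹ * (Real.sqrt (a ⬝ᵥ a))⁻¹ = (a ⬝ᵥ a)⁻¹ := by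
      rw [← mul_inv, Real.mul_self_sqrt haa.le]
    rw [h]; exact inv_mul_cancel₀ haa.ne'
  have hf1 : (fun k => r * a k) = fun k => r * a k := rfl
  have hf2 : (fun k => r * cp g a k) = fun k => r * cp g a k := rfl
  have hg' := hg; have hga' := hga; have haa' := hr2
  rw [dot3] at hg' hga' haa'
  refine ⟨Matrix.of ![fun k => r * a k, fun k => r * cp g a k, g], ?_, ?_⟩
  · rw [Matrix.mem_orthogonalGroup_iff]
    ext i j
    rw [Matrix.mul_apply]
    simp only [Matrix.transpose_apply]
    fin_cases i <;> fin_cases j <;>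
      simp only [Matrix.of_apply, Matrix.cons_val', Matrix.cons_val_zero, Matrix.cons_val_one,
        Matrix.head_cons, Matrix.head_fin_const, Matrix.cons_val_fin_one, Matrix.empty_val',
        Fin.sum_univ_three, Fin.isValue, Matrix.cons_val_two, Matrix.tail_cons,
        Matrix.one_apply_eq, hf1, hf2, cp_0, cp_1, cp_2, Matrix.one_apply]
    any_goals norm_num [Fin.ext_iff]
    all_goals
      first
        | ring1
        | linear_combination haa'
        | linear_combination hg'
        | linear_combination r * hga'
        | linear_combination (r * r * (a 0 * a 0 + a 1 * a 1 + a 2 * a 2)) * hg' + haa'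
            - (r * r * (g 0 * a 0 + g 1 * a 1 + g 2 * a 2)) * hga'
  · intro i
    have e0 : (0:ℝ) ≤ (fun k => r * a k) ⬝ᵥ u i := by
      have e : (fun k => r * a k) ⬝ᵥ u i = r * (a ⬝ᵥ u i) := by
        simp only [dot3]; ring
      rw [e]; exact mul_nonneg hrpos.le (h1 i)
    have e1 : (0:ℝ) ≤ (fun k => r * cp g a k) ⬝ᵥ u i := by
      have e : (fun k => r * cp g a k) ⬝ᵥ u i = r * (cp g a ⬝ᵥ u i) := by
        simp only [dot3]; ring
      rw [e]; exact mul_nonneg hrpos.le (h2 i)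
    rw [Pi.le_def]
    intro k
    fin_cases k
    · exact e0
    · exact e1
    · exact h3 i

theorem embeddable_iff_exists_unit_normal
    (p : ℕ) (u : Fin p → (Fin 3 → ℝ)) :
    (∃ Q ∈ Matrix.orthogonalGroup (Fin 3) ℝ, ∀ i, 0 ≤ Q.mulVec (u i)) ↔
    (∃ g : Fin 3 → ℝ, g ⬝ᵥ g = 1 ∧
      ∀ i j, (g ⬝ᵥ u i) * (g ⬝ᵥ u j) ≤ u i ⬝ᵥ u j ∧ 0 ≤ (g ⬝ᵥ u i) * (g ⬝ᵥ u j)) := by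
  classical
  constructor
  · rintro ⟨Q, hQ, hpos⟩
    have hQt : Q * Qᵀ = 1 := by
      have := (Matrix.mem_orthogonalGroup_iff (Fin 3) ℝ).mp hQ
      exact this
    have hQt' : Qᵀ * Q = 1 := by
      have := (Matrix.mem_orthogonalGroup_iff' (Fin 3) ℝ).mp hQ
      exact this
    have hpos' : ∀ k l, 0 ≤ Q.mulVec (u k) l := fun k l => Pi.le_def.mp (hpos k) l
    have hdot : ∀ x y : Fin 3 → ℝ, Q.mulVec x ⬝ᵥ Q.mulVec y = x ⬝ᵥ y := by
      intro x y
      rw [Matrix.dotProduct_mulVec, Matrix.vecMul_mulVec, hQt', Matrix.vecMul_one]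
    have hrow : ∀ k, Q 2 ⬝ᵥ u k = Q.mulVec (u k) 2 := fun k => rfl
    refine ⟨Q 2, ?_, ?_⟩
    · have h := congrFun (congrFun hQt 2) 2
      rw [Matrix.mul_apply] at h
      simpa [dotProduct, Matrix.transpose_apply] using h
    · intro i j
      rw [hrow, hrow, ← hdot (u i) (u j), dot3]
      constructor
      · nlinarith [mul_nonneg (hpos' i 0) (hpos' j 0), mul_nonneg (hpos' i 1) (hpos' j 1)]
      · exact mul_nonneg (hpos' i 2) (hpos' j 2)
  · rintro ⟨g, hg, h⟩
    obtain ⟨g, hg, hc, hle⟩ : ∃ g' : Fin 3 → ℝ, g' ⬝ᵥ g' = 1 ∧ (∀ i, 0 ≤ g' ⬝ᵥ u i) ∧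
        (∀ i j, (g' ⬝ᵥ u i) * (g' ⬝ᵥ u j) ≤ u i ⬝ᵥ u j) := by
      by_cases hneg : ∃ k, g ⬝ᵥ u k < 0
      · obtain ⟨k, hk⟩ := hneg
        refine ⟨-g, by simpa using hg, fun i => ?_, fun i j => ?_⟩
        · have h2 := (h i k).2
          rw [neg_dotProduct]
          nlinarith [h2, hk]
        · have h1 := (h i j).1
          rw [neg_dotProduct, neg_dotProduct, neg_mul_neg]
          exact h1
      · push_neg at hneg
        exact ⟨g, hg, hneg, fun i j => (h i j).1⟩
    have hg' := hg; rw [dot3] at hg'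
    set w : Fin p → (Fin 3 → ℝ) := fun i k => u i k - (g ⬝ᵥ u i) * g k with hw
    have hgw : ∀ i, g ⬝ᵥ w i = 0 := by
      intro i
      simp only [dot3, hw]
      linear_combination (-(g 0 * u i 0 + g 1 * u i 1 + g 2 * u i 2)) * hg'
    have hdww : ∀ i j, w i ⬝ᵥ w j = u i ⬝ᵥ u j - (g ⬝ᵥ u i) * (g ⬝ᵥ u j) := by
      intro i j
      simp only [dot3, hw]
      linear_combination ((g 0 * u i 0 + g 1 * u i 1 + g 2 * u i 2)
        * (g 0 * u j 0 + g 1 * u j 1 + g 2 * u j 2)) * hg'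
    have hww : ∀ i j, 0 ≤ w i ⬝ᵥ w j := by
      intro i j
      rw [hdww]
      have := hle i j
      linarith
    by_cases hz : ∃ m, w m ≠ 0
    · obtain ⟨m0, hm0⟩ := hz
      obtain ⟨m, hm, hmin⟩ := exists_bot (fun i j => 0 ≤ cp g (w i) ⬝ᵥ w j)
        (Finset.univ.filter (fun i => w i ≠ 0))
        (fun a _ b _ => by
          rcases le_total 0 (cp g (w a) ⬝ᵥ w b) with h' | h'
          · exact Or.inl h'
          · right; show 0 ≤ cp g (w b) ⬝ᵥ w a; rw [cp_skew]; linarith)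
        (fun a _ b hb c _ h1 h2 =>
          trans3 g (w a) (w b) (w c) (hgw b)
            (by simpa using (Finset.mem_filter.mp hb).2) (hww a b) (hww b c) h1 h2)
        ⟨m0, Finset.mem_filter.mpr ⟨Finset.mem_univ _, hm0⟩⟩
      have hm' : w m ≠ 0 := (Finset.mem_filter.mp hm).2
      have hmin' : ∀ i, 0 ≤ cp g (w m) ⬝ᵥ w i := by
        intro i
        by_cases hi : w i = 0
        · rw [hi]; simp
        · exact hmin i (Finset.mem_filter.mpr ⟨Finset.mem_univ _, hi⟩)
      refine build p u g (w m) hg hm' (hgw m) ?_ ?_ hc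
      · intro i
        have e : w m ⬝ᵥ u i = w m ⬝ᵥ w i + (g ⬝ᵥ u i) * (g ⬝ᵥ w m) := by
          simp only [dot3, hw]; ring
        rw [e, hgw m]
        simpa using hww m i
      · intro i
        have e : cp g (w m) ⬝ᵥ u i = cp g (w m) ⬝ᵥ w i := by
          simp only [dot3, cp_0, cp_1, cp_2, hw]; ring
        rw [e]; exact hmin' i
    · push_neg at hz
      have hui : ∀ i k, u i k = (g ⬝ᵥ u i) * g k := by
        intro i k
        have := congrFun (hz i) k
        simpa [hw, sub_eq_zero] using this
      obtain ⟨a, ha0, hga⟩ : ∃ a : Fin 3 → ℝ, a ≠ 0 ∧ g ⬝ᵥ a = 0 := by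
        by_cases hg01 : g 0 = 0 ∧ g 1 = 0
        · refine ⟨![1, 0, 0], ?_, ?_⟩
          · intro hcon; have := congrFun hcon 0; norm_num at this
          · rw [dot3]; norm_num [hg01.1]; right; rfl
        · refine ⟨![-(g 1), g 0, 0], ?_, ?_⟩
          · intro hcon
            have h0 := congrFun hcon 0
            have h1 := congrFun hcon 1
            simp at h0 h1
            exact hg01 ⟨h1, h0⟩
          · rw [dot3]; simp; ring
      have hga' := hga; rw [dot3] at hga'
      refine build p u g a hg ha0 hga ?_ ?_ hc
      · intro i
        rw [dot3, hui i 0, hui i 1, hui i 2]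
        have : a 0 * ((g ⬝ᵥ u i) * g 0) + a 1 * ((g ⬝ᵥ u i) * g 1) + a 2 * ((g ⬝ᵥ u i) * g 2)
            = 0 := by linear_combination (g ⬝ᵥ u i) * hga'
        rw [this]
      · intro i
        rw [dot3, hui i 0, hui i 1, hui i 2, cp_0, cp_1, cp_2]
        have : (g 1 * a 2 - g 2 * a 1) * ((g ⬝ᵥ u i) * g 0)
            + (g 2 * a 0 - g 0 * a 2) * ((g ⬝ᵥ u i) * g 1)
            + (g 0 * a 1 - g 1 * a 0) * ((g ⬝ᵥ u i) * g 2) = 0 := by ring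
        rw [this]
end

section
/- Let u₁, …, u_{p−1} be nonzero vectors in ℝ² such that the angle between u₁ and u₂ is the largest among the angles of all pairs from {u₁, …, u_{p−1}} and this largest angle is at most π/2, and such that the pair (u₁, u₂) is positively oriented. Let u_p ∈ ℝ² be nonzero. Then the largest angle among all pairs from {u₁, …, u_p} is at most π/2 if and only if ⟨u₁, u_p⟩ ≥ 0 and ⟨u₂, u_p⟩ ≥ 0. -/
open Matrix Real

/-- The angle between two vectors of `ℝ²`. -/
noncomputable def ang (u v : Fin 2 → ℝ) : ℝ :=
  Real.arccos ((u ⬝ᵥ v) / (Real.sqrt (u ⬝ᵥ u) * Real.sqrt (v ⬝ᵥ v)))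

/-- The pair `(u, v)` is positively oriented: the determinant of the matrix
with columns `u`, `v` is positive. -/
def posOriented (u v : Fin 2 → ℝ) : Prop := 0 < u 0 * v 1 - u 1 * v 0

lemma dot2 (u v : Fin 2 → ℝ) : u ⬝ᵥ v = u 0 * v 0 + u 1 * v 1 := by
  simp [dotProduct, Fin.sum_univ_two]

lemma dot_self_pos {u : Fin 2 → ℝ} (hu : u ≠ 0) : 0 < u ⬝ᵥ u := by
  have h : u 0 ≠ 0 ∨ u 1 ≠ 0 := by
    by_contra h
    push_neg at h
    exact hu (funext fun i => by fin_cases i <;> simp [h.1, h.2])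
  rw [dot2]
  rcases h with h | h
  · nlinarith [mul_self_pos.mpr h, mul_self_nonneg (u 1)]
  · nlinarith [mul_self_pos.mpr h, mul_self_nonneg (u 0)]

lemma cs2 (u v : Fin 2 → ℝ) : (u ⬝ᵥ v) ^ 2 ≤ (u ⬝ᵥ u) * (v ⬝ᵥ v) := by
  rw [dot2, dot2, dot2]
  nlinarith [sq_nonneg (u 0 * v 1 - u 1 * v 0)]

lemma cs2' {u v : Fin 2 → ℝ} (hu : u ≠ 0) (hv : v ≠ 0) :
    u ⬝ᵥ v ≤ Real.sqrt (u ⬝ᵥ u) * Real.sqrt (v ⬝ᵥ v) ∧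
      -(Real.sqrt (u ⬝ᵥ u) * Real.sqrt (v ⬝ᵥ v)) ≤ u ⬝ᵥ v := by
  have h1 := dot_self_pos hu
  have h2 := dot_self_pos hv
  have s1 : Real.sqrt (u ⬝ᵥ u) ^ 2 = u ⬝ᵥ u := Real.sq_sqrt h1.le
  have s2 : Real.sqrt (v ⬝ᵥ v) ^ 2 = v ⬝ᵥ v := Real.sq_sqrt h2.le
  have p1 : 0 < Real.sqrt (u ⬝ᵥ u) := Real.sqrt_pos.mpr h1
  have p2 : 0 < Real.sqrt (v ⬝ᵥ v) := Real.sqrt_pos.mpr h2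
  have := cs2 u v
  constructor <;> nlinarith [mul_pos p1 p2]

lemma ang_le_half_iff {u v : Fin 2 → ℝ} (hu : u ≠ 0) (hv : v ≠ 0) :
    ang u v ≤ π / 2 ↔ 0 ≤ u ⬝ᵥ v := by
  have p1 : 0 < Real.sqrt (u ⬝ᵥ u) := Real.sqrt_pos.mpr (dot_self_pos hu)
  have p2 : 0 < Real.sqrt (v ⬝ᵥ v) := Real.sqrt_pos.mpr (dot_self_pos hv)
  rw [ang, Real.arccos_le_pi_div_two, le_div_iff₀ (mul_pos p1 p2), zero_mul]

lemma cos_ge_of_ang_le {u v A B : Fin 2 → ℝ} (hu : u ≠ 0) (hv : v ≠ 0)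
    (hA : A ≠ 0) (hB : B ≠ 0) (h : ang u v ≤ ang A B) :
    (A ⬝ᵥ B) * (Real.sqrt (u ⬝ᵥ u) * Real.sqrt (v ⬝ᵥ v)) ≤
      (u ⬝ᵥ v) * (Real.sqrt (A ⬝ᵥ A) * Real.sqrt (B ⬝ᵥ B)) := by
  have p1 : 0 < Real.sqrt (u ⬝ᵥ u) * Real.sqrt (v ⬝ᵥ v) :=
    mul_pos (Real.sqrt_pos.mpr (dot_self_pos hu)) (Real.sqrt_pos.mpr (dot_self_pos hv))
  have p2 : 0 < Real.sqrt (A ⬝ᵥ A) * Real.sqrt (B ⬝ᵥ B) :=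
    mul_pos (Real.sqrt_pos.mpr (dot_self_pos hA)) (Real.sqrt_pos.mpr (dot_self_pos hB))
  have b1 := cs2' hu hv
  have b2 := cs2' hA hB
  have hx : (u ⬝ᵥ v) / (Real.sqrt (u ⬝ᵥ u) * Real.sqrt (v ⬝ᵥ v)) ∈ Set.Icc (-1 : ℝ) 1 := by
    constructor
    · rw [le_div_iff₀ p1]; linarith [b1.2]
    · rw [div_le_one p1]; exact b1.1
  have hy : (A ⬝ᵥ B) / (Real.sqrt (A ⬝ᵥ A) * Real.sqrt (B ⬝ᵥ B)) ∈ Set.Icc (-1 : ℝ) 1 := by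
    constructor
    · rw [le_div_iff₀ p2]; linarith [b2.2]
    · rw [div_le_one p2]; exact b2.1
  have key : (A ⬝ᵥ B) / (Real.sqrt (A ⬝ᵥ A) * Real.sqrt (B ⬝ᵥ B)) ≤
      (u ⬝ᵥ v) / (Real.sqrt (u ⬝ᵥ u) * Real.sqrt (v ⬝ᵥ v)) := by
    by_contra hc
    push_neg at hc
    exact absurd h (not_le.mpr (Real.strictAntiOn_arccos hx hy hc))
  rw [div_le_div_iff₀ p2 p1] at key
  linarith

lemma cone_key {a b v w : Fin 2 → ℝ} (ha : a ≠ 0) (hb : b ≠ 0) (hv : v ≠ 0)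
    (hd : 0 < a 0 * b 1 - a 1 * b 0) (hab : 0 ≤ a ⬝ᵥ b)
    (h1 : ang a v ≤ ang a b) (h2 : ang b v ≤ ang a b)
    (hw1 : 0 ≤ a ⬝ᵥ w) (hw2 : 0 ≤ b ⬝ᵥ w) : 0 ≤ v ⬝ᵥ w := by
  set Na := Real.sqrt (a ⬝ᵥ a) with hNa
  set Nb := Real.sqrt (b ⬝ᵥ b) with hNb
  set Nv := Real.sqrt (v ⬝ᵥ v) with hNv
  have pa : 0 < Na := Real.sqrt_pos.mpr (dot_self_pos ha)
  have pb : 0 < Nb := Real.sqrt_pos.mpr (dot_self_pos hb)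
  have pv : 0 < Nv := Real.sqrt_pos.mpr (dot_self_pos hv)
  have sa : Na ^ 2 = a ⬝ᵥ a := Real.sq_sqrt (dot_self_pos ha).le
  have sb : Nb ^ 2 = b ⬝ᵥ b := Real.sq_sqrt (dot_self_pos hb).le
  have c1 := cos_ge_of_ang_le ha hv ha hb h1
  have c2 := cos_ge_of_ang_le hb hv ha hb h2
  -- e1 : (a⬝b) * Nv ≤ (a⬝v) * Nb ; e2 : (a⬝b) * Nv ≤ (b⬝v) * Na
  have e1 : (a ⬝ᵥ b) * Nv ≤ (a ⬝ᵥ v) * Nb := by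
    rw [show (a ⬝ᵥ b) * (Na * Nv) = Na * ((a ⬝ᵥ b) * Nv) by ring,
      show (a ⬝ᵥ v) * (Na * Nb) = Na * ((a ⬝ᵥ v) * Nb) by ring] at c1
    exact le_of_mul_le_mul_left c1 pa
  have e2 : (a ⬝ᵥ b) * Nv ≤ (b ⬝ᵥ v) * Na := by
    rw [show (a ⬝ᵥ b) * (Nb * Nv) = Nb * ((a ⬝ᵥ b) * Nv) by ring,
      show (b ⬝ᵥ v) * (Na * Nb) = Nb * ((b ⬝ᵥ v) * Na) by ring] at c2
    exact le_of_mul_le_mul_left c2 pb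
  have csav : a ⬝ᵥ v ≤ Na * Nv := (cs2' ha hv).1
  have csbv : b ⬝ᵥ v ≤ Nb * Nv := (cs2' hb hv).1
  have id1 : (a ⬝ᵥ a) * (b ⬝ᵥ v) =
      (a ⬝ᵥ b) * (a ⬝ᵥ v) + (a 0 * b 1 - a 1 * b 0) * (a 0 * v 1 - a 1 * v 0) := by
    rw [dot2, dot2, dot2, dot2]; ring
  have id2 : (b ⬝ᵥ b) * (a ⬝ᵥ v) =
      (a ⬝ᵥ b) * (b ⬝ᵥ v) + (a 0 * b 1 - a 1 * b 0) * (v 0 * b 1 - v 1 * b 0) := by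
    rw [dot2, dot2, dot2, dot2]; ring
  have id3 : (a 0 * b 1 - a 1 * b 0) * (v ⬝ᵥ w) =
      (v 0 * b 1 - v 1 * b 0) * (a ⬝ᵥ w) + (a 0 * v 1 - a 1 * v 0) * (b ⬝ᵥ w) := by
    rw [dot2, dot2, dot2]; ring
  have xa : 0 ≤ a 0 * v 1 - a 1 * v 0 := by
    have hB : (b ⬝ᵥ v) * Na ^ 2 = (b ⬝ᵥ v) * (a ⬝ᵥ a) := by rw [sa]
    have hda : 0 ≤ (a 0 * b 1 - a 1 * b 0) * (a 0 * v 1 - a 1 * v 0) := by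
      nlinarith [id1, hB, mul_le_mul_of_nonneg_right e2 pa.le,
        mul_le_mul_of_nonneg_left csav hab]
    exact (mul_nonneg_iff_of_pos_left hd).mp hda
  have xb : 0 ≤ v 0 * b 1 - v 1 * b 0 := by
    have hB2 : (a ⬝ᵥ v) * Nb ^ 2 = (a ⬝ᵥ v) * (b ⬝ᵥ b) := by rw [sb]
    have hdb : 0 ≤ (a 0 * b 1 - a 1 * b 0) * (v 0 * b 1 - v 1 * b 0) := by
      nlinarith [id2, hB2, mul_le_mul_of_nonneg_right e1 pb.le,
        mul_le_mul_of_nonneg_left csbv hab]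
    exact (mul_nonneg_iff_of_pos_left hd).mp hdb
  have : 0 ≤ (a 0 * b 1 - a 1 * b 0) * (v ⬝ᵥ w) := by
    rw [id3]
    exact add_nonneg (mul_nonneg xb hw1) (mul_nonneg xa hw2)
  exact (mul_nonneg_iff_of_pos_left hd).mp this

theorem largest_angle_nonobtuse_iff
    (n : ℕ) (hn : 2 ≤ n) (u : Fin n → (Fin 2 → ℝ))
    (hu : ∀ i, u i ≠ 0)
    (h0 : 0 < n) (h1 : 1 < n)
    (hmax : ∀ i j, ang (u i) (u j) ≤ ang (u ⟨0, h0⟩) (u ⟨1, h1⟩))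
    (hnonobtuse : ang (u ⟨0, h0⟩) (u ⟨1, h1⟩) ≤ π / 2)
    (horient : posOriented (u ⟨0, h0⟩) (u ⟨1, h1⟩))
    (w : Fin 2 → ℝ) (hw : w ≠ 0) :
    (∀ i j : Fin (n + 1), ang ((Fin.snoc u w : Fin (n + 1) → (Fin 2 → ℝ)) i) ((Fin.snoc u w : Fin (n + 1) → (Fin 2 → ℝ)) j) ≤ π / 2) ↔
      (0 ≤ u ⟨0, h0⟩ ⬝ᵥ w ∧ 0 ≤ u ⟨1, h1⟩ ⬝ᵥ w) := by
  constructor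
  · intro h
    have hA := h (Fin.castSucc ⟨0, h0⟩) (Fin.last n)
    have hB := h (Fin.castSucc ⟨1, h1⟩) (Fin.last n)
    rw [Fin.snoc_castSucc, Fin.snoc_last] at hA hB
    exact ⟨(ang_le_half_iff (hu _) hw).mp hA, (ang_le_half_iff (hu _) hw).mp hB⟩
  · rintro ⟨hw1, hw2⟩ i j
    have hab : 0 ≤ u ⟨0, h0⟩ ⬝ᵥ u ⟨1, h1⟩ :=
      (ang_le_half_iff (hu _) (hu _)).mp hnonobtuse
    have main : ∀ k : Fin n, 0 ≤ u k ⬝ᵥ w := fun k =>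
      cone_key (hu _) (hu _) (hu k) horient hab (hmax ⟨0, h0⟩ k) (hmax ⟨1, h1⟩ k) hw1 hw2
    rcases Fin.eq_castSucc_or_eq_last i with ⟨i', rfl⟩ | rfl <;>
      rcases Fin.eq_castSucc_or_eq_last j with ⟨j', rfl⟩ | rfl <;>
      simp only [Fin.snoc_castSucc, Fin.snoc_last]
    · exact (hmax i' j').trans hnonobtuse
    · exact (ang_le_half_iff (hu i') hw).mpr (main i')
    · exact (ang_le_half_iff hw (hu j')).mpr (by rw [dotProduct_comm]; exact main j')
    · exact (ang_le_half_iff hw hw).mpr (dot_self_pos hw).le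
end

section
/- Let u₁, …, u_p be nonzero vectors in ℝ² such that ⟨u_i, u_j⟩ ≥ 0 for all i, j, the angle between u₁ and u₂ is the largest among the angles of all pairs, and (u₁, u₂) is positively oriented. Let Q ∈ SO(2) be the rotation with Q u₁ = ‖u₁‖·e₁. Then Q u_j ≥ 0 (both coordinates nonnegative) for all j ∈ {1, …, p}. -/
open Matrix Real

lemma dot_two (a b : Fin 2 → ℝ) : a ⬝ᵥ b = a 0 * b 0 + a 1 * b 1 := by
  simp [dotProduct, Fin.sum_univ_two]

lemma mulVec_two (Q : Matrix (Fin 2) (Fin 2) ℝ) (a : Fin 2 → ℝ) (i : Fin 2) :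
    Q.mulVec a i = Q i 0 * a 0 + Q i 1 * a 1 := by
  simp [Matrix.mulVec, dotProduct, Fin.sum_univ_two]

lemma preserve_dot (Q : Matrix (Fin 2) (Fin 2) ℝ)
    (h : Qᵀ * Q = 1) (a b : Fin 2 → ℝ) :
    Q.mulVec a ⬝ᵥ Q.mulVec b = a ⬝ᵥ b := by
  have h00 : Q 0 0 * Q 0 0 + Q 1 0 * Q 1 0 = 1 := by
    have := congrFun (congrFun h 0) 0
    simpa [Matrix.mul_apply, Fin.sum_univ_two, Matrix.one_apply] using this
  have h11 : Q 0 1 * Q 0 1 + Q 1 1 * Q 1 1 = 1 := by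
    have := congrFun (congrFun h 1) 1
    simpa [Matrix.mul_apply, Fin.sum_univ_two, Matrix.one_apply] using this
  have h01 : Q 0 0 * Q 0 1 + Q 1 0 * Q 1 1 = 0 := by
    have := congrFun (congrFun h 0) 1
    simpa [Matrix.mul_apply, Fin.sum_univ_two, Matrix.one_apply] using this
  simp only [dot_two, mulVec_two]
  linear_combination a 0 * b 0 * h00 + a 1 * b 1 * h11 + (a 0 * b 1 + a 1 * b 0) * h01

set_option maxHeartbeats 1000000 in
theorem rotation_maps_into_nonneg_quadrant
    (p : ℕ) (u : Fin p → (Fin 2 → ℝ))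
    (hu : ∀ i, u i ≠ 0)
    (h0 : 0 < p) (h1 : 1 < p)
    (hdot : ∀ i j, 0 ≤ u i ⬝ᵥ u j)
    (hmax : ∀ i j, ang (u i) (u j) ≤ ang (u ⟨0, h0⟩) (u ⟨1, h1⟩))
    (horient : posOriented (u ⟨0, h0⟩) (u ⟨1, h1⟩))
    (Q : Matrix (Fin 2) (Fin 2) ℝ) (hQ : Q ∈ Matrix.specialOrthogonalGroup (Fin 2) ℝ)
    (hQu : Q.mulVec (u ⟨0, h0⟩) = Real.sqrt (u ⟨0, h0⟩ ⬝ᵥ u ⟨0, h0⟩) • ![1, 0]) :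
    ∀ j, 0 ≤ Q.mulVec (u j) := by
  rw [Matrix.mem_specialOrthogonalGroup_iff, Matrix.mem_orthogonalGroup_iff'] at hQ
  obtain ⟨horth, hdet⟩ := hQ
  have horth' : Qᵀ * Q = 1 := by
    simpa [Matrix.star_eq_conjTranspose, Matrix.conjTranspose] using horth
  have hpres := preserve_dot Q horth'
  have normpos : ∀ i : Fin p, 0 < u i ⬝ᵥ u i := by
    intro i
    have hnn : (0:ℝ) ≤ u i ⬝ᵥ u i := by
      rw [dot_two]; nlinarith [sq_nonneg (u i 0), sq_nonneg (u i 1)]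
    rcases hnn.lt_or_eq with h | h
    · exact h
    · exfalso
      apply hu i
      have hd : u i 0 * u i 0 + u i 1 * u i 1 = 0 := by rw [← dot_two, ← h]
      have e0 : u i 0 = 0 := by nlinarith [sq_nonneg (u i 0), sq_nonneg (u i 1)]
      have e1 : u i 1 = 0 := by nlinarith [sq_nonneg (u i 0), sq_nonneg (u i 1)]
      funext k
      fin_cases k
      · simpa using e0
      · simpa using e1
  set i0 : Fin p := ⟨0, h0⟩
  set i1 : Fin p := ⟨1, h1⟩
  set r : ℝ := Real.sqrt (u i0 ⬝ᵥ u i0) with hr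
  have hrpos : 0 < r := Real.sqrt_pos.mpr (normpos i0)
  have hv00 : Q.mulVec (u i0) 0 = r := by rw [hQu]; simp
  have hv01 : Q.mulVec (u i0) 1 = 0 := by rw [hQu]; simp
  intro j
  set x := Q.mulVec (u j) 0 with hx
  set y := Q.mulVec (u j) 1 with hy
  set c := Q.mulVec (u i1) 0 with hc
  set s := Q.mulVec (u i1) 1 with hs
  clear_value x y c s
  have hxnn : 0 ≤ x := by
    have h' := hdot i0 j
    rw [← hpres (u i0) (u j), dot_two, hv00, hv01] at h'
    nlinarith
  have hcnn : 0 ≤ c := by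
    have h' := hdot i0 i1
    rw [← hpres (u i0) (u i1), dot_two, hv00, hv01] at h'
    nlinarith
  have hdQ : Q 0 0 * Q 1 1 - Q 0 1 * Q 1 0 = 1 := by
    rw [Matrix.det_fin_two] at hdet; linarith
  have hdet2 : Q.mulVec (u i0) 0 * s - Q.mulVec (u i0) 1 * c
      = u i0 0 * u i1 1 - u i0 1 * u i1 0 := by
    rw [hs, hc]
    simp only [mulVec_two]
    linear_combination (u i0 0 * u i1 1 - u i0 1 * u i1 0) * hdQ
  have hspos : 0 < s := by
    have h' : 0 < u i0 0 * u i1 1 - u i0 1 * u i1 0 := horient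
    rw [← hdet2, hv00, hv01] at h'
    nlinarith
  have hynn : 0 ≤ y := by
    by_contra hyneg
    push_neg at hyneg
    have nj2 : u j ⬝ᵥ u j = x^2 + y^2 := by
      rw [← hpres (u j) (u j), dot_two, ← hx, ← hy]; ring
    have n12 : u i1 ⬝ᵥ u i1 = c^2 + s^2 := by
      rw [← hpres (u i1) (u i1), dot_two, ← hc, ← hs]; ring
    have dj1 : u j ⬝ᵥ u i1 = x*c + y*s := by
      rw [← hpres (u j) (u i1), dot_two, ← hx, ← hy, ← hc, ← hs]
    have d01 : u i0 ⬝ᵥ u i1 = r*c := by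
      rw [← hpres (u i0) (u i1), dot_two, hv00, hv01, ← hc]; ring
    have hnjpos : 0 < Real.sqrt (u j ⬝ᵥ u j) := Real.sqrt_pos.mpr (normpos j)
    have hn1pos : 0 < Real.sqrt (u i1 ⬝ᵥ u i1) := Real.sqrt_pos.mpr (normpos i1)
    set nj : ℝ := Real.sqrt (u j ⬝ᵥ u j) with hnj
    set n1 : ℝ := Real.sqrt (u i1 ⬝ᵥ u i1) with hn1
    clear_value nj n1
    have hnjsq : nj^2 = x^2 + y^2 := by
      rw [hnj, Real.sq_sqrt (le_of_lt (normpos j)), nj2]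
    have hn1sq : n1^2 = c^2 + s^2 := by
      rw [hn1, Real.sq_sqrt (le_of_lt (normpos i1)), n12]
    have hprod : (nj*n1)^2 = (x^2+y^2)*(c^2+s^2) := by
      rw [mul_pow, hnjsq, hn1sq]
    have hCS : (x*c + y*s)^2 ≤ (nj*n1)^2 := by
      nlinarith [sq_nonneg (x*s - y*c)]
    have hnn1 : 0 < nj * n1 := mul_pos hnjpos hn1pos
    have hAub : x*c + y*s ≤ nj*n1 := by nlinarith
    have hAlb : -(nj*n1) ≤ x*c + y*s := by nlinarith
    have hAmem : (u j ⬝ᵥ u i1) / (nj * n1) ∈ Set.Icc (-1:ℝ) 1 := by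
      rw [dj1]
      constructor
      · rw [le_div_iff₀ hnn1]; linarith
      · rw [div_le_one hnn1]; linarith
    have hcle : c ≤ n1 := by nlinarith [sq_nonneg s]
    have hBmem : (u i0 ⬝ᵥ u i1) / (r * n1) ∈ Set.Icc (-1:ℝ) 1 := by
      rw [d01]
      constructor
      · rw [le_div_iff₀ (mul_pos hrpos hn1pos)]; nlinarith
      · rw [div_le_one (mul_pos hrpos hn1pos)]; nlinarith
    have hBA : (u i0 ⬝ᵥ u i1) / (r * n1) ≤ (u j ⬝ᵥ u i1) / (nj * n1) := by
      by_contra hlt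
      push_neg at hlt
      have harc := Real.strictAntiOn_arccos hAmem hBmem hlt
      have hmaxj := hmax j i1
      unfold ang at hmaxj
      rw [← hnj, ← hn1, ← hr] at hmaxj
      linarith
    rw [dj1, d01] at hBA
    have hre : r*c/(r*n1) = c/n1 := by field_simp
    rw [hre, div_le_div_iff₀ hn1pos hnn1] at hBA
    have key : c * nj ≤ x*c + y*s := by
      have h2 : (c*nj)*n1 ≤ (x*c+y*s)*n1 := by linarith [hBA]
      exact le_of_mul_le_mul_right h2 hn1pos
    have hxle : x ≤ nj := by nlinarith [sq_nonneg y, hnjsq]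
    have h3 : x*c ≤ nj*c := mul_le_mul_of_nonneg_right hxle hcnn
    have h4 : 0 < s * (-y) := mul_pos hspos (neg_pos.mpr hyneg)
    linarith
  intro k
  fin_cases k
  · simpa [← hx] using hxnn
  · simpa [← hy] using hynn
end

section
/- A finite set U ⊆ ℝ² can be mapped into the nonnegative quadrant ℝ²≥0 by an orthogonal linear map of ℝ² if and only if ⟨u, v⟩ ≥ 0 for all u, v ∈ U. -/
open Matrix

private lemma exists_rel_min {α : Type*} (r : α → α → Prop) :
    ∀ (s : Finset α), s.Nonempty →
    (∀ a ∈ s, ∀ b ∈ s, r a b ∨ r b a) →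
    (∀ a ∈ s, ∀ b ∈ s, ∀ c ∈ s, r a b → r b c → r a c) →
    ∃ a ∈ s, ∀ b ∈ s, r a b := by
  intro s
  induction s using Finset.cons_induction with
  | empty => simp
  | cons x t hx ih =>
    intro _ htot htrans
    by_cases ht : t.Nonempty
    · obtain ⟨a, ha, hmin⟩ := ih ht
        (fun a ha b hb => htot a (Finset.mem_cons_of_mem ha) b (Finset.mem_cons_of_mem hb))
        (fun a ha b hb c hc => htrans a (Finset.mem_cons_of_mem ha)
          b (Finset.mem_cons_of_mem hb) c (Finset.mem_cons_of_mem hc))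
      have hamem : a ∈ Finset.cons x t hx := Finset.mem_cons_of_mem ha
      rcases htot a hamem x (Finset.mem_cons_self x t) with h | h
      · refine ⟨a, hamem, fun b hb => ?_⟩
        rcases Finset.mem_cons.mp hb with rfl | hb
        · exact h
        · exact hmin b hb
      · refine ⟨x, Finset.mem_cons_self x t, fun b hb => ?_⟩
        rcases Finset.mem_cons.mp hb with rfl | hb
        · rcases htot b (Finset.mem_cons_self b t) b (Finset.mem_cons_self b t) with h' | h' <;>
            exact h'
        · exact htrans x (Finset.mem_cons_self x t) a hamem b (Finset.mem_cons_of_mem hb) h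
            (hmin b hb)
    · rw [Finset.not_nonempty_iff_eq_empty] at ht
      subst ht
      refine ⟨x, Finset.mem_cons_self x ∅, fun b hb => ?_⟩
      rcases Finset.mem_cons.mp hb with rfl | hb
      · rcases htot b (Finset.mem_cons_self b ∅) b (Finset.mem_cons_self b ∅) with h' | h' <;>
          exact h'
      · simp at hb

theorem embeddable_into_quadrant_iff_nonneg_inner
    (U : Finset (Fin 2 → ℝ)) :
    (∃ Q ∈ Matrix.orthogonalGroup (Fin 2) ℝ, ∀ u ∈ U, 0 ≤ Q.mulVec u) ↔
    (∀ u ∈ U, ∀ v ∈ U, 0 ≤ u ⬝ᵥ v) := by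
  constructor
  · rintro ⟨Q, hQ, hpos⟩ u hu v hv
    rw [Matrix.mem_orthogonalGroup_iff'] at hQ
    have htQ : Qᵀ * Q = 1 := hQ
    have key : (Q.mulVec u) ⬝ᵥ (Q.mulVec v) = u ⬝ᵥ v := by
      rw [Matrix.dotProduct_mulVec, ← Matrix.mulVec_transpose, Matrix.mulVec_mulVec, htQ,
        Matrix.one_mulVec]
    rw [← key]
    exact Finset.sum_nonneg fun i _ => mul_nonneg (hpos u hu i) (hpos v hv i)
  · intro h
    classical
    set N : Finset (Fin 2 → ℝ) := U.filter (· ≠ 0) with hN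
    by_cases hne : N.Nonempty
    · -- find the "most clockwise" vector
      have cross_total : ∀ a ∈ N, ∀ b ∈ N,
          (0 ≤ a 0 * b 1 - a 1 * b 0) ∨ (0 ≤ b 0 * a 1 - b 1 * a 0) := by
        intro a _ b _; by_cases hc : 0 ≤ a 0 * b 1 - a 1 * b 0
        · exact Or.inl hc
        · right; nlinarith [not_le.mp hc]
      have cross_trans : ∀ a ∈ N, ∀ b ∈ N, ∀ c ∈ N,
          0 ≤ a 0 * b 1 - a 1 * b 0 → 0 ≤ b 0 * c 1 - b 1 * c 0 →
          0 ≤ a 0 * c 1 - a 1 * c 0 := by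
        intro a ha b hb c hc hab hbc
        rw [hN, Finset.mem_filter] at ha hb hc
        have hiab : 0 ≤ a ⬝ᵥ b := h a ha.1 b hb.1
        have hibc : 0 ≤ b ⬝ᵥ c := h b hb.1 c hc.1
        simp only [dotProduct, Fin.sum_univ_two] at hiab hibc
        have hb0 : b 0 ^ 2 + b 1 ^ 2 > 0 := by
          have h01 : b 0 ≠ 0 ∨ b 1 ≠ 0 := by
            by_contra hcon
            push_neg at hcon
            exact hb.2 (funext fun i => by fin_cases i <;> simp [hcon.1, hcon.2])
          rcases h01 with h' | h' <;> positivity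
        have key : (a 0 * c 1 - a 1 * c 0) * (b 0 ^ 2 + b 1 ^ 2)
            = (a 0 * b 0 + a 1 * b 1) * (b 0 * c 1 - b 1 * c 0)
            + (a 0 * b 1 - a 1 * b 0) * (b 0 * c 0 + b 1 * c 1) := by ring
        nlinarith [mul_nonneg hiab hbc, mul_nonneg hab hibc]
      obtain ⟨w, hwN, hwmin⟩ := exists_rel_min
        (fun a b => 0 ≤ a 0 * b 1 - a 1 * b 0) N hne cross_total cross_trans
      rw [hN, Finset.mem_filter] at hwN
      obtain ⟨hwU, hwne⟩ := hwN
      set a := w 0 with ha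
      set b := w 1 with hb
      have hr2 : 0 < a ^ 2 + b ^ 2 := by
        have h01 : a ≠ 0 ∨ b ≠ 0 := by
          by_contra hcon
          push_neg at hcon
          exact hwne (funext fun i => by fin_cases i <;> simp [← ha, ← hb, hcon.1, hcon.2])
        rcases h01 with h' | h' <;> positivity
      set r : ℝ := Real.sqrt (a ^ 2 + b ^ 2) with hrdef
      have hr : 0 < r := Real.sqrt_pos.mpr hr2
      have hrsq : r ^ 2 = a ^ 2 + b ^ 2 := Real.sq_sqrt hr2.le
      refine ⟨Matrix.of ![![a / r, b / r], ![-(b / r), a / r]], ?_, ?_⟩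
      · rw [Matrix.mem_orthogonalGroup_iff]
        ext i j
        fin_cases i <;> fin_cases j <;>
          simp [Matrix.mul_apply, Fin.sum_univ_two, Matrix.one_apply] <;>
          field_simp <;> nlinarith [hrsq]
      · intro u hu
        intro i
        have hinner : 0 ≤ a * u 0 + b * u 1 := by
          have := h w hwU u hu
          simp only [dotProduct, Fin.sum_univ_two] at this
          linarith [this]
        have hcross : 0 ≤ a * u 1 - b * u 0 := by
          by_cases hu0 : u = 0
          · simp [hu0]
          · have := hwmin u (Finset.mem_filter.mpr ⟨hu, hu0⟩)
            linarith [this]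
        fin_cases i
        · simp only [Matrix.mulVec, dotProduct, Fin.sum_univ_two, Matrix.of_apply,
            Matrix.cons_val', Matrix.cons_val_zero, Matrix.cons_val_one, Matrix.head_cons,
            Matrix.empty_val', Matrix.cons_val_fin_one, Matrix.head_fin_const]
          have e : a / r * u 0 + b / r * u 1 = (a * u 0 + b * u 1) / r := by ring
          show (0:ℝ) ≤ a / r * u 0 + b / r * u 1
          rw [e]
          exact div_nonneg hinner hr.le
        · simp only [Matrix.mulVec, dotProduct, Fin.sum_univ_two, Matrix.of_apply,
            Matrix.cons_val', Matrix.cons_val_zero, Matrix.cons_val_one, Matrix.head_cons,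
            Matrix.empty_val', Matrix.cons_val_fin_one, Matrix.head_fin_const, Pi.zero_apply]
          show (0:ℝ) ≤ -(b / r) * u 0 + a / r * u 1
          have e : -(b / r) * u 0 + a / r * u 1 = (a * u 1 - b * u 0) / r := by ring
          rw [e]
          exact div_nonneg hcross hr.le
    · refine ⟨1, Submonoid.one_mem _, fun u hu i => ?_⟩
      have : u = 0 := by
        by_contra h0
        exact hne ⟨u, Finset.mem_filter.mpr ⟨hu, h0⟩⟩
      simp [this]
end

section
/- Let φ₂(x) = (√6/4)(x²−1), φ₃(x) = (√10/4)·x·(x²−1), φ₄(x) = (√14/16)(5x²−1)(x²−1), and let Φ(x) = (φ₂(x), φ₃(x), φ₄(x)) ∈ ℝ³. There exists no orthogonal linear map Q of ℝ³ such that QΦ(x) has all three coordinates nonnegative for every x ∈ [−1, 1]. -/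
open Matrix

/-- Extend nonnegativity from the open interval to the closed one by continuity. -/
lemma aux_endpoint_nonneg (f : ℝ → ℝ) (hf : Continuous f)
    (h : ∀ x ∈ Set.Ioo (-1 : ℝ) 1, 0 ≤ f x) :
    ∀ x ∈ Set.Icc (-1 : ℝ) 1, 0 ≤ f x := by
  have hclos : ∀ x ∈ closure (Set.Ioo (-1 : ℝ) 1), 0 ≤ f x := by
    intro x hx
    have hne : (nhdsWithin x (Set.Ioo (-1 : ℝ) 1)).NeBot :=
      mem_closure_iff_nhdsWithin_neBot.mp hx
    refine ge_of_tendsto (hf.continuousWithinAt (s := Set.Ioo (-1 : ℝ) 1)) ?_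
    exact eventually_mem_nhdsWithin.mono (fun y hy => h y hy)
  intro x hx
  apply hclos
  rw [closure_Ioo (by norm_num : (-1 : ℝ) ≠ 1)]
  exact hx

/-- A quadratic `C + D x + g x²` nonnegative on `[-1,1]` satisfies `D² ≤ 4 C (C+g)`. -/
lemma aux_quad_bound (C D g : ℝ)
    (h : ∀ x ∈ Set.Icc (-1 : ℝ) 1, 0 ≤ C + D * x + g * x ^ 2) :
    D ^ 2 ≤ 4 * C * (C + g) := by
  have hA := h 1 (by norm_num)
  have hB := h (-1) (by norm_num)
  have hC := h 0 (by norm_num)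
  norm_num at hA hB hC
  have hS : 0 ≤ C + g := by nlinarith
  rcases le_or_gt g 0 with hg | hg
  · nlinarith [mul_nonneg hA hB, mul_nonneg hC hS, mul_nonpos_of_nonneg_of_nonpos hS hg]
  · rcases le_or_gt (D ^ 2) (4 * g ^ 2) with hD | hD
    · -- vertex inside the interval
      have h2g : (0:ℝ) < 2 * g := by linarith
      have hm1 : (-1:ℝ) ≤ -D / (2 * g) := by
        rw [le_div_iff₀ h2g]
        nlinarith
      have hm2 : -D / (2 * g) ≤ 1 := by
        rw [div_le_iff₀ h2g]
        nlinarith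
      have hv := h (-D / (2 * g)) ⟨hm1, hm2⟩
      have hv' : 0 ≤ (C + D * (-D / (2 * g)) + g * (-D / (2 * g)) ^ 2) * (4 * g) :=
        mul_nonneg hv (by linarith)
      have heq : (C + D * (-D / (2 * g)) + g * (-D / (2 * g)) ^ 2) * (4 * g)
          = 4 * C * g - D ^ 2 := by
        field_simp
        ring
      rw [heq] at hv'
      nlinarith
    · -- vertex outside the interval
      have h1 : D ^ 2 ≤ (C + g) ^ 2 := by nlinarith [mul_nonneg hA hB]
      have h2 : g < C := by nlinarith
      nlinarith [mul_nonneg hS (by linarith : (0:ℝ) ≤ 3 * C - g)]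

/-- Equality case: `D² = 4 C (C+g)` forces `D = 0`. -/
lemma aux_quad_eq (C D g : ℝ)
    (h : ∀ x ∈ Set.Icc (-1 : ℝ) 1, 0 ≤ C + D * x + g * x ^ 2)
    (he : D ^ 2 = 4 * C * (C + g)) : D = 0 := by
  have hA := h 1 (by norm_num)
  have hB := h (-1) (by norm_num)
  have hC := h 0 (by norm_num)
  norm_num at hA hB hC
  have hS : 0 ≤ C + g := by nlinarith
  have hD2 : D ^ 2 ≤ 0 := by
    rcases le_or_gt g 0 with hg | hg
    · have h1 : D ^ 2 ≤ (C + g) ^ 2 := by nlinarith [mul_nonneg hA hB]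
      have h2 : (C + g) ^ 2 ≤ C * (C + g) := by nlinarith
      nlinarith [mul_nonneg hC hS]
    · rcases le_or_gt (D ^ 2) (4 * g ^ 2) with hD | hD
      · have h2g : (0:ℝ) < 2 * g := by linarith
        have hm1 : (-1:ℝ) ≤ -D / (2 * g) := by
          rw [le_div_iff₀ h2g]; nlinarith
        have hm2 : -D / (2 * g) ≤ 1 := by
          rw [div_le_iff₀ h2g]; nlinarith
        have hv := h (-D / (2 * g)) ⟨hm1, hm2⟩
        have hv' : 0 ≤ (C + D * (-D / (2 * g)) + g * (-D / (2 * g)) ^ 2) * (4 * g) :=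
          mul_nonneg hv (by linarith)
        have heq : (C + D * (-D / (2 * g)) + g * (-D / (2 * g)) ^ 2) * (4 * g)
            = 4 * C * g - D ^ 2 := by
          field_simp; ring
        rw [heq] at hv'
        -- D² ≤ 4Cg and D² = 4C² + 4Cg  ⟹  C² ≤ 0 ⟹ C = 0 ⟹ D² = 4Cg ≤ 0? need care
        have hC0 : C ^ 2 ≤ 0 := by nlinarith
        have : C = 0 := by nlinarith [sq_nonneg C]
        nlinarith
      · have h1 : D ^ 2 ≤ (C + g) ^ 2 := by nlinarith [mul_nonneg hA hB]
        have h2 : g < C := by nlinarith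
        -- 4C(C+g) = D² ≤ (C+g)² ⟹ (C+g)(3C-g) ≤ 0, but both factors ≥ 0; if product 0 then D²=0
        have h3 : (C + g) * (3 * C - g) ≤ 0 := by nlinarith
        have h4 : (C + g) * (3 * C - g) = 0 :=
          le_antisymm h3 (mul_nonneg hS (by linarith))
        rcases mul_eq_zero.mp h4 with h5 | h5
        · nlinarith
        · nlinarith
  have : D ^ 2 = 0 := le_antisymm hD2 (sq_nonneg D)
  exact pow_eq_zero_iff two_ne_zero |>.mp this

/-- The Lobatto curve `Φ(x) = (φ₂(x), φ₃(x), φ₄(x))`. -/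
noncomputable def lobattoCurve (x : ℝ) : Fin 3 → ℝ :=
  ![Real.sqrt 6 / 4 * (x ^ 2 - 1),
    Real.sqrt 10 / 4 * x * (x ^ 2 - 1),
    Real.sqrt 14 / 16 * (5 * x ^ 2 - 1) * (x ^ 2 - 1)]

theorem lobatto_curve_not_embeddable :
    ¬ ∃ Q ∈ Matrix.orthogonalGroup (Fin 3) ℝ,
      ∀ x ∈ Set.Icc (-1 : ℝ) 1, 0 ≤ Q.mulVec (lobattoCurve x) := by
  rintro ⟨Q, hQ, hpos⟩
  have hQ' : star Q * Q = 1 := (Matrix.mem_orthogonalGroup_iff' (Fin 3) ℝ).mp hQ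
  set s6 := Real.sqrt 6 with hs6
  set s10 := Real.sqrt 10 with hs10
  set s14 := Real.sqrt 14 with hs14
  have h6 : s6 ^ 2 = 6 := Real.sq_sqrt (by norm_num)
  have h10 : s10 ^ 2 = 10 := Real.sq_sqrt (by norm_num)
  have h14 : s14 ^ 2 = 14 := Real.sq_sqrt (by norm_num)
  -- column orthonormality relations
  have col : ∀ j k : Fin 3,
      Q 0 j * Q 0 k + Q 1 j * Q 1 k + Q 2 j * Q 2 k = if j = k then 1 else 0 := by
    intro j k
    have := congrFun (congrFun hQ' j) k
    simpa [Matrix.mul_apply, Matrix.one_apply, Fin.sum_univ_three,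
      Matrix.conjTranspose_apply] using this
  have ha : Q 0 0 * Q 0 0 + Q 1 0 * Q 1 0 + Q 2 0 * Q 2 0 = 1 := by simpa using col 0 0
  have hbb : Q 0 1 * Q 0 1 + Q 1 1 * Q 1 1 + Q 2 1 * Q 2 1 = 1 := by simpa using col 1 1
  have hcc : Q 0 2 * Q 0 2 + Q 1 2 * Q 1 2 + Q 2 2 * Q 2 2 = 1 := by simpa using col 2 2
  have hac : Q 0 0 * Q 0 2 + Q 1 0 * Q 1 2 + Q 2 0 * Q 2 2 = 0 := by simpa using col 0 2
  -- per-row quadratic data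
  have hrow : ∀ i : Fin 3, ∀ x ∈ Set.Icc (-1 : ℝ) 1,
      0 ≤ (-(s6 / 4) * Q i 0 + s14 / 16 * Q i 2) + (-(s10 / 4) * Q i 1) * x
        + (-(5 * s14 / 16) * Q i 2) * x ^ 2 := by
    intro i
    apply aux_endpoint_nonneg _ (by continuity)
    intro x hx
    have hp := hpos x (Set.Ioo_subset_Icc_self hx) i
    simp only [Matrix.mulVec, dotProduct, lobattoCurve, Fin.sum_univ_three,
      Matrix.cons_val_zero, Matrix.cons_val_one, Matrix.head_cons, Pi.zero_apply,
      Matrix.cons_val_two, Matrix.tail_cons] at hp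
    have hkey : Q i 0 * (s6 / 4 * (x ^ 2 - 1)) + Q i 1 * (s10 / 4 * x * (x ^ 2 - 1))
        + Q i 2 * (s14 / 16 * (5 * x ^ 2 - 1) * (x ^ 2 - 1))
        = (1 - x ^ 2) * ((-(s6 / 4) * Q i 0 + s14 / 16 * Q i 2)
            + (-(s10 / 4) * Q i 1) * x + (-(5 * s14 / 16) * Q i 2) * x ^ 2) := by
      ring
    rw [hkey] at hp
    have hx2 : 0 < 1 - x ^ 2 := by nlinarith [hx.1, hx.2]
    have h0 : (1 - x ^ 2) * 0 ≤ (1 - x ^ 2) * ((-(s6 / 4) * Q i 0 + s14 / 16 * Q i 2)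
        + (-(s10 / 4) * Q i 1) * x + (-(5 * s14 / 16) * Q i 2) * x ^ 2) := by
      simpa using hp
    exact le_of_mul_le_mul_left h0 hx2
  have hb0 := aux_quad_bound _ _ _ (hrow 0)
  have hb1 := aux_quad_bound _ _ _ (hrow 1)
  have hb2 := aux_quad_bound _ _ _ (hrow 2)
  -- sum identities
  have hDsum : (-(s10 / 4) * Q 0 1) ^ 2 + (-(s10 / 4) * Q 1 1) ^ 2
      + (-(s10 / 4) * Q 2 1) ^ 2 = 5 / 8 := by
    linear_combination (10 / 16) * hbb
      + ((Q 0 1) ^ 2 / 16 + (Q 1 1) ^ 2 / 16 + (Q 2 1) ^ 2 / 16) * h10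
  have hCSsum :
      4 * (-(s6 / 4) * Q 0 0 + s14 / 16 * Q 0 2)
        * ((-(s6 / 4) * Q 0 0 + s14 / 16 * Q 0 2) + (-(5 * s14 / 16) * Q 0 2))
      + 4 * (-(s6 / 4) * Q 1 0 + s14 / 16 * Q 1 2)
        * ((-(s6 / 4) * Q 1 0 + s14 / 16 * Q 1 2) + (-(5 * s14 / 16) * Q 1 2))
      + 4 * (-(s6 / 4) * Q 2 0 + s14 / 16 * Q 2 2)
        * ((-(s6 / 4) * Q 2 0 + s14 / 16 * Q 2 2) + (-(5 * s14 / 16) * Q 2 2))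
      = 5 / 8 := by
    linear_combination ((Q 0 0) ^ 2 / 4 + (Q 1 0) ^ 2 / 4 + (Q 2 0) ^ 2 / 4) * h6
      - ((Q 0 2) ^ 2 / 16 + (Q 1 2) ^ 2 / 16 + (Q 2 2) ^ 2 / 16) * h14
      + (3 * s6 * s14 / 16) * hac + (6 / 4) * ha - (14 / 16) * hcc
  have he0 := aux_quad_eq _ _ _ (hrow 0) (by linarith)
  have he1 := aux_quad_eq _ _ _ (hrow 1) (by linarith)
  have he2 := aux_quad_eq _ _ _ (hrow 2) (by linarith)
  rw [he0, he1, he2] at hDsum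
  norm_num at hDsum
end

section
/- The four vectors v₁ = (√6, −√10, √14), v₂ = (√6, −√10/2, √14/16), v₃ = (√6, √10/2, √14/16), v₄ = (√6, √10, √14) in ℝ³ cannot be isometrically embedded into the nonnegative octant: there is no orthogonal linear map Q of ℝ³ such that Qv_i ≥ 0 for all i ∈ {1,2,3,4}. -/
set_option maxHeartbeats 1000000

open Matrix

private lemma tri_cert (u a b : ℝ) (h1 : 0 ≤ a - u) (h2 : 0 ≤ a + u - 10)
    (h3 : 0 ≤ 2*b - u) (h4 : 0 ≤ 2*b + u - 10) (hu : 0 ≤ u)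
    (hF : 0 ≤ 95*u - 4*u^2 - 8*(a*b) - 4*(u*a) - 8*(u*b))
    (hG : 155*a^2 - 352*(a*b) + 512*b^2 = 189*(u*(10-u))) : False := by
  nlinarith [mul_nonneg h1 h3, mul_nonneg h1 h4, mul_nonneg h2 h3, mul_nonneg h2 h4,
             mul_nonneg h2 hF, mul_nonneg h3 hF, mul_nonneg (mul_nonneg hu h2) h3,
             mul_nonneg (mul_nonneg h2 h2) h4, mul_nonneg (mul_nonneg h2 h3) h3,
             h1, h3, hF, hG]

private lemma master (x y z m1 m2 m3 p1 p2 p3 : ℝ)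
    (hx : 0 ≤ x) (hy : 0 ≤ y) (hz : 0 ≤ z)
    (hm1 : x ≤ m1) (hm2 : y ≤ m2) (hm3 : z ≤ m3)
    (hp1 : x ≤ 2*p1) (hp2 : y ≤ 2*p2) (hp3 : z ≤ 2*p3)
    (e1 : x^2 + y^2 + z^2 = 10) (e2 : m1^2 + m2^2 + m3^2 = 20)
    (e3 : p1^2 + p2^2 + p3^2 = 775/128)
    (e4 : m1*p1 + m2*p2 + m3*p3 = 55/8)
    (e5 : x*m1 = y*m2 + z*m3) (e6 : x*p1 = y*p2 + z*p3) : False := by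
  have hym2 : y*y ≤ y*m2 := mul_le_mul_of_nonneg_left hm2 hy
  have hzm3 : z*z ≤ z*m3 := mul_le_mul_of_nonneg_left hm3 hz
  have hyp2 : y*y ≤ y*(2*p2) := mul_le_mul_of_nonneg_left hp2 hy
  have hzp3 : z*z ≤ z*(2*p3) := mul_le_mul_of_nonneg_left hp3 hz
  have hB : 10 - x^2 ≤ x*m1 := by linarith [hym2, hzm3, e1, e5]
  have hD : 10 - x^2 ≤ 2*(x*p1) := by linarith [hyp2, hzp3, e1, e6]
  have hx' : 0 < x := by
    rcases hx.lt_or_eq with h | h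
    · exact h
    · exfalso; rw [← h] at hB; linarith [hB]
  have h10 : x^2 < 10 := by
    by_contra h
    push_neg at h
    have hy2 : y^2 = 0 := le_antisymm (by linarith [sq_nonneg z]) (sq_nonneg y)
    have hz2 : z^2 = 0 := le_antisymm (by linarith [sq_nonneg y]) (sq_nonneg z)
    have hy0 : y = 0 := by
      have := sq_eq_zero_iff.mp hy2; exact this
    have hz0 : z = 0 := by
      have := sq_eq_zero_iff.mp hz2; exact this
    rw [hy0, hz0] at e5
    have hm1' : 0 < m1 := lt_of_lt_of_le hx' hm1
    have : (0:ℝ) < x*m1 := mul_pos hx' hm1'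
    rw [e5] at this
    simp at this
  have hA' : 0 ≤ x*m1 - x^2 := by linarith [mul_le_mul_of_nonneg_left hm1 hx]
  have hC' : 0 ≤ 2*(x*p1) - x^2 := by linarith [mul_le_mul_of_nonneg_left hp1 hx]
  have hFkey : 0 ≤ (m2-y)*(p2-y/2) + (m3-z)*(p3-z/2) :=
    add_nonneg (mul_nonneg (by linarith) (by linarith)) (mul_nonneg (by linarith) (by linarith))
  have hF0eq : (m2-y)*(p2-y/2) + (m3-z)*(p3-z/2)
      = 55/8 - m1*p1 - x*p1 - x*m1/2 + (10-x^2)/2 := by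
    linear_combination e4 + (1/2)*e5 + e6 + (1/2)*e1
  have hF0 : 0 ≤ 55/8 - m1*p1 - x*p1 - x*m1/2 + (10-x^2)/2 := hF0eq ▸ hFkey
  have hFs : 0 ≤ x^2 * (55/8 - m1*p1 - x*p1 - x*m1/2 + (10-x^2)/2) := mul_nonneg (sq_nonneg x) hF0
  have hKm : ((10-x^2)*(20 - m1^2) - x^2*m1^2) = (y*m3 - z*m2)^2 := by
    linear_combination (-(m2^2+m3^2))*e1 + (-(10-x^2))*e2 + (-(y*m2+z*m3+x*m1))*e5
  have hKp : ((10-x^2)*(775/128 - p1^2) - x^2*p1^2) = (y*p3 - z*p2)^2 := by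
    linear_combination (-(p2^2+p3^2))*e1 + (-(10-x^2))*e3 + (-(y*p2+z*p3+x*p1))*e6
  have hKmp : ((10-x^2)*(55/8 - m1*p1) - x^2*(m1*p1)) = (y*m3 - z*m2)*(y*p3 - z*p2) := by
    linear_combination (-(m2*p2+m3*p3))*e1 + (-(10-x^2))*e4 + (-(y*p2+z*p3))*e5 + (-(x*m1))*e6
  have hQ : ((10-x^2)*(55/8 - m1*p1) - x^2*(m1*p1))^2
      = ((10-x^2)*(20 - m1^2) - x^2*m1^2) * ((10-x^2)*(775/128 - p1^2) - x^2*p1^2) := by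
    rw [hKm, hKp, hKmp]; ring
  have hGG : (x^2*(10-x^2)) * (155*(x*m1)^2 - 352*((x*m1)*(x*p1)) + 512*(x*p1)^2
      - 189*(x^2*(10-x^2))) = 0 := by
    linear_combination (64/25*x^4)*hQ
  have hLpos : 0 < x^2*(10-x^2) := mul_pos (by positivity) (by linarith)
  have hG : 155*(x*m1)^2 - 352*((x*m1)*(x*p1)) + 512*(x*p1)^2 - 189*(x^2*(10-x^2)) = 0 := by
    rcases mul_eq_zero.mp hGG with h | h
    · exact absurd h hLpos.ne'
    · exact h
  exact tri_cert (x^2) (x*m1) (x*p1) (by linarith) (by linarith) (by linarith) (by linarith)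
    (sq_nonneg x) (by linarith [hFs]) (by linear_combination hG)

private lemma main12 (a0 a1 a2 b0 b1 b2 c0 c1 c2 d0 d1 d2 : ℝ)
    (ha0 : 0 ≤ a0) (ha1 : 0 ≤ a1) (ha2 : 0 ≤ a2)
    (hb0 : 0 ≤ b0) (hb1 : 0 ≤ b1) (hb2 : 0 ≤ b2)
    (hc0 : 0 ≤ c0) (hc1 : 0 ≤ c1) (hc2 : 0 ≤ c2)
    (hd0 : 0 ≤ d0) (hd1 : 0 ≤ d1) (hd2 : 0 ≤ d2)
    (gA : a0^2+a1^2+a2^2 = 30) (gD : d0^2+d1^2+d2^2 = 30)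
    (gAD : a0*d0+a1*d1+a2*d2 = 10)
    (gB : b0^2+b1^2+b2^2 = 1095/128) (gC : c0^2+c1^2+c2^2 = 1095/128)
    (gBC : b0*c0+b1*c1+b2*c2 = 455/128)
    (gAB : a0*b0+a1*b1+a2*b2 = 95/8) (gAC : a0*c0+a1*c1+a2*c2 = 15/8)
    (gDB : d0*b0+d1*b1+d2*b2 = 15/8) (gDC : d0*c0+d1*c1+d2*c2 = 95/8) : False := by
  have hsq : (2*(c0-b0)-(d0-a0))^2 + (2*(c1-b1)-(d1-a1))^2 + (2*(c2-b2)-(d2-a2))^2 = 0 := by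
    linear_combination 4*gC + 4*gB - 8*gBC - 4*gDC + 4*gAC + 4*gDB - 4*gAB + gD + gA - 2*gAD
  have hq0 : 2*(c0-b0) = (d0-a0) := by
    have h : (2*(c0-b0)-(d0-a0))^2 = 0 :=
      le_antisymm (by linarith [sq_nonneg (2*(c1-b1)-(d1-a1)), sq_nonneg (2*(c2-b2)-(d2-a2))]) (sq_nonneg _)
    have h2 := sq_eq_zero_iff.mp h
    linarith [h2]
  have hq1 : 2*(c1-b1) = (d1-a1) := by
    have h : (2*(c1-b1)-(d1-a1))^2 = 0 :=
      le_antisymm (by linarith [sq_nonneg (2*(c0-b0)-(d0-a0)), sq_nonneg (2*(c2-b2)-(d2-a2))]) (sq_nonneg _)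
    have h2 := sq_eq_zero_iff.mp h
    linarith [h2]
  have hq2 : 2*(c2-b2) = (d2-a2) := by
    have h : (2*(c2-b2)-(d2-a2))^2 = 0 :=
      le_antisymm (by linarith [sq_nonneg (2*(c0-b0)-(d0-a0)), sq_nonneg (2*(c1-b1)-(d1-a1))]) (sq_nonneg _)
    have h2 := sq_eq_zero_iff.mp h
    linarith [h2]
  rcases le_total a0 d0 with h0 | h0 <;> rcases le_total a1 d1 with h1 | h1 <;> rcases le_total a2 d2 with h2 | h2
  · -- case ('+', '+', '+')
    linarith [mul_le_mul_of_nonneg_right (show ((d0-a0)/2) ≤ ((a0+d0)/2) by linarith) (show (0:ℝ) ≤ ((d0-a0)/2) by linarith), mul_le_mul_of_nonneg_right (show ((d1-a1)/2) ≤ ((a1+d1)/2) by linarith) (show (0:ℝ) ≤ ((d1-a1)/2) by linarith), mul_le_mul_of_nonneg_right (show ((d2-a2)/2) ≤ ((a2+d2)/2) by linarith) (show (0:ℝ) ≤ ((d2-a2)/2) by linarith), gA, gD, gAD]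
  · -- case ('+', '+', '-')
    refine master ((a2-d2)/2) ((d0-a0)/2) ((d1-a1)/2) ((a2+d2)/2) ((a0+d0)/2) ((a1+d1)/2) ((b2+c2)/2) ((b0+c0)/2) ((b1+c1)/2) ?_ ?_ ?_ ?_ ?_ ?_ ?_ ?_ ?_ ?_ ?_ ?_ ?_ ?_ ?_
    · linarith  -- hx
    · linarith  -- hy
    · linarith  -- hz
    · linarith [hd2, ha2]  -- hm1
    · linarith [ha0, hd0]
    · linarith [ha1, hd1]
    · linarith [hq2, hb2, hc2]
    · linarith [hq0, hb0, hc0]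
    · linarith [hq1, hb1, hc1]
    · linear_combination (1/4)*gA + (1/4)*gD - (1/2)*gAD
    · linear_combination (1/4)*gA + (1/4)*gD + (1/2)*gAD
    · linear_combination (1/4)*gB + (1/4)*gC + (1/2)*gBC
    · linear_combination (1/4)*gAB + (1/4)*gAC + (1/4)*gDB + (1/4)*gDC
    · linear_combination (1/4)*gA - (1/4)*gD
    · linear_combination (1/4)*gAB + (1/4)*gAC - (1/4)*gDB - (1/4)*gDC
  · -- case ('+', '-', '+')
    refine master ((a1-d1)/2) ((d0-a0)/2) ((d2-a2)/2) ((a1+d1)/2) ((a0+d0)/2) ((a2+d2)/2) ((b1+c1)/2) ((b0+c0)/2) ((b2+c2)/2) ?_ ?_ ?_ ?_ ?_ ?_ ?_ ?_ ?_ ?_ ?_ ?_ ?_ ?_ ?_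
    · linarith  -- hx
    · linarith  -- hy
    · linarith  -- hz
    · linarith [hd1, ha1]  -- hm1
    · linarith [ha0, hd0]
    · linarith [ha2, hd2]
    · linarith [hq1, hb1, hc1]
    · linarith [hq0, hb0, hc0]
    · linarith [hq2, hb2, hc2]
    · linear_combination (1/4)*gA + (1/4)*gD - (1/2)*gAD
    · linear_combination (1/4)*gA + (1/4)*gD + (1/2)*gAD
    · linear_combination (1/4)*gB + (1/4)*gC + (1/2)*gBC
    · linear_combination (1/4)*gAB + (1/4)*gAC + (1/4)*gDB + (1/4)*gDC
    · linear_combination (1/4)*gA - (1/4)*gD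
    · linear_combination (1/4)*gAB + (1/4)*gAC - (1/4)*gDB - (1/4)*gDC
  · -- case ('+', '-', '-')
    refine master ((d0-a0)/2) ((a1-d1)/2) ((a2-d2)/2) ((a0+d0)/2) ((a1+d1)/2) ((a2+d2)/2) ((b0+c0)/2) ((b1+c1)/2) ((b2+c2)/2) ?_ ?_ ?_ ?_ ?_ ?_ ?_ ?_ ?_ ?_ ?_ ?_ ?_ ?_ ?_
    · linarith  -- hx
    · linarith  -- hy
    · linarith  -- hz
    · linarith [hd0, ha0]  -- hm1
    · linarith [ha1, hd1]
    · linarith [ha2, hd2]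
    · linarith [hq0, hb0, hc0]
    · linarith [hq1, hb1, hc1]
    · linarith [hq2, hb2, hc2]
    · linear_combination (1/4)*gA + (1/4)*gD - (1/2)*gAD
    · linear_combination (1/4)*gA + (1/4)*gD + (1/2)*gAD
    · linear_combination (1/4)*gB + (1/4)*gC + (1/2)*gBC
    · linear_combination (1/4)*gAB + (1/4)*gAC + (1/4)*gDB + (1/4)*gDC
    · linear_combination (1/4)*gD - (1/4)*gA
    · linear_combination (1/4)*gDB + (1/4)*gDC - (1/4)*gAB - (1/4)*gAC
  · -- case ('-', '+', '+')
    refine master ((a0-d0)/2) ((d1-a1)/2) ((d2-a2)/2) ((a0+d0)/2) ((a1+d1)/2) ((a2+d2)/2) ((b0+c0)/2) ((b1+c1)/2) ((b2+c2)/2) ?_ ?_ ?_ ?_ ?_ ?_ ?_ ?_ ?_ ?_ ?_ ?_ ?_ ?_ ?_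
    · linarith  -- hx
    · linarith  -- hy
    · linarith  -- hz
    · linarith [hd0, ha0]  -- hm1
    · linarith [ha1, hd1]
    · linarith [ha2, hd2]
    · linarith [hq0, hb0, hc0]
    · linarith [hq1, hb1, hc1]
    · linarith [hq2, hb2, hc2]
    · linear_combination (1/4)*gA + (1/4)*gD - (1/2)*gAD
    · linear_combination (1/4)*gA + (1/4)*gD + (1/2)*gAD
    · linear_combination (1/4)*gB + (1/4)*gC + (1/2)*gBC
    · linear_combination (1/4)*gAB + (1/4)*gAC + (1/4)*gDB + (1/4)*gDC
    · linear_combination (1/4)*gA - (1/4)*gD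
    · linear_combination (1/4)*gAB + (1/4)*gAC - (1/4)*gDB - (1/4)*gDC
  · -- case ('-', '+', '-')
    refine master ((d1-a1)/2) ((a0-d0)/2) ((a2-d2)/2) ((a1+d1)/2) ((a0+d0)/2) ((a2+d2)/2) ((b1+c1)/2) ((b0+c0)/2) ((b2+c2)/2) ?_ ?_ ?_ ?_ ?_ ?_ ?_ ?_ ?_ ?_ ?_ ?_ ?_ ?_ ?_
    · linarith  -- hx
    · linarith  -- hy
    · linarith  -- hz
    · linarith [hd1, ha1]  -- hm1
    · linarith [ha0, hd0]
    · linarith [ha2, hd2]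
    · linarith [hq1, hb1, hc1]
    · linarith [hq0, hb0, hc0]
    · linarith [hq2, hb2, hc2]
    · linear_combination (1/4)*gA + (1/4)*gD - (1/2)*gAD
    · linear_combination (1/4)*gA + (1/4)*gD + (1/2)*gAD
    · linear_combination (1/4)*gB + (1/4)*gC + (1/2)*gBC
    · linear_combination (1/4)*gAB + (1/4)*gAC + (1/4)*gDB + (1/4)*gDC
    · linear_combination (1/4)*gD - (1/4)*gA
    · linear_combination (1/4)*gDB + (1/4)*gDC - (1/4)*gAB - (1/4)*gAC
  · -- case ('-', '-', '+')
    refine master ((d2-a2)/2) ((a0-d0)/2) ((a1-d1)/2) ((a2+d2)/2) ((a0+d0)/2) ((a1+d1)/2) ((b2+c2)/2) ((b0+c0)/2) ((b1+c1)/2) ?_ ?_ ?_ ?_ ?_ ?_ ?_ ?_ ?_ ?_ ?_ ?_ ?_ ?_ ?_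
    · linarith  -- hx
    · linarith  -- hy
    · linarith  -- hz
    · linarith [hd2, ha2]  -- hm1
    · linarith [ha0, hd0]
    · linarith [ha1, hd1]
    · linarith [hq2, hb2, hc2]
    · linarith [hq0, hb0, hc0]
    · linarith [hq1, hb1, hc1]
    · linear_combination (1/4)*gA + (1/4)*gD - (1/2)*gAD
    · linear_combination (1/4)*gA + (1/4)*gD + (1/2)*gAD
    · linear_combination (1/4)*gB + (1/4)*gC + (1/2)*gBC
    · linear_combination (1/4)*gAB + (1/4)*gAC + (1/4)*gDB + (1/4)*gDC
    · linear_combination (1/4)*gD - (1/4)*gA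
    · linear_combination (1/4)*gDB + (1/4)*gDC - (1/4)*gAB - (1/4)*gAC
  · -- case ('-', '-', '-')
    linarith [mul_le_mul_of_nonneg_right (show ((a0-d0)/2) ≤ ((a0+d0)/2) by linarith) (show (0:ℝ) ≤ ((a0-d0)/2) by linarith), mul_le_mul_of_nonneg_right (show ((a1-d1)/2) ≤ ((a1+d1)/2) by linarith) (show (0:ℝ) ≤ ((a1-d1)/2) by linarith), mul_le_mul_of_nonneg_right (show ((a2-d2)/2) ≤ ((a2+d2)/2) by linarith) (show (0:ℝ) ≤ ((a2-d2)/2) by linarith), gA, gD, gAD]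

theorem four_curve_points_not_embeddable :
    ¬ ∃ Q ∈ Matrix.orthogonalGroup (Fin 3) ℝ,
      ∀ v ∈ ({![Real.sqrt 6, -Real.sqrt 10, Real.sqrt 14],
               ![Real.sqrt 6, -Real.sqrt 10 / 2, Real.sqrt 14 / 16],
               ![Real.sqrt 6, Real.sqrt 10 / 2, Real.sqrt 14 / 16],
               ![Real.sqrt 6, Real.sqrt 10, Real.sqrt 14]} : Set (Fin 3 → ℝ)),
        0 ≤ Q.mulVec v := by
  rintro ⟨Q, hQ, hvec⟩
  have hQtQ : Qᵀ * Q = 1 := by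
    have h := (Matrix.mem_orthogonalGroup_iff' (n := Fin 3) (R := ℝ)).mp hQ
    exact h
  have hdot : ∀ v u : Fin 3 → ℝ, (Q.mulVec v) ⬝ᵥ (Q.mulVec u) = v ⬝ᵥ u := by
    intro v u
    rw [Matrix.dotProduct_mulVec, Matrix.vecMul_mulVec, hQtQ, Matrix.vecMul_one]
  set v1 : Fin 3 → ℝ := ![Real.sqrt 6, -Real.sqrt 10, Real.sqrt 14] with hv1
  set v2 : Fin 3 → ℝ := ![Real.sqrt 6, -Real.sqrt 10 / 2, Real.sqrt 14 / 16] with hv2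
  set v3 : Fin 3 → ℝ := ![Real.sqrt 6, Real.sqrt 10 / 2, Real.sqrt 14 / 16] with hv3
  set v4 : Fin 3 → ℝ := ![Real.sqrt 6, Real.sqrt 10, Real.sqrt 14] with hv4
  have hw1 : 0 ≤ Q.mulVec v1 := hvec _ (Set.mem_insert _ _)
  have hw2 : 0 ≤ Q.mulVec v2 := hvec _ (Set.mem_insert_of_mem _ (Set.mem_insert _ _))
  have hw3 : 0 ≤ Q.mulVec v3 :=
    hvec _ (Set.mem_insert_of_mem _ (Set.mem_insert_of_mem _ (Set.mem_insert _ _)))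
  have hw4 : 0 ≤ Q.mulVec v4 :=
    hvec _ (Set.mem_insert_of_mem _ (Set.mem_insert_of_mem _ (Set.mem_insert_of_mem _ rfl)))
  have h6 : Real.sqrt 6 * Real.sqrt 6 = 6 := Real.mul_self_sqrt (by norm_num)
  have h10 : Real.sqrt 10 * Real.sqrt 10 = 10 := Real.mul_self_sqrt (by norm_num)
  have h14 : Real.sqrt 14 * Real.sqrt 14 = 14 := Real.mul_self_sqrt (by norm_num)
  have hs6 : Real.sqrt 6 ^ 2 = 6 := Real.sq_sqrt (by norm_num)
  have hs10 : Real.sqrt 10 ^ 2 = 10 := Real.sq_sqrt (by norm_num)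
  have hs14 : Real.sqrt 14 ^ 2 = 14 := Real.sq_sqrt (by norm_num)
  have hd0 : ∀ v u : Fin 3 → ℝ, v ⬝ᵥ u = v 0 * u 0 + v 1 * u 1 + v 2 * u 2 := by
    intro v u; simp [dotProduct, Fin.sum_univ_three]
  have key : ∀ (v u : Fin 3 → ℝ) (r : ℝ), v ⬝ᵥ u = r →
      (Q.mulVec v) 0 * (Q.mulVec u) 0 + (Q.mulVec v) 1 * (Q.mulVec u) 1
      + (Q.mulVec v) 2 * (Q.mulVec u) 2 = r := by
    intro v u r h
    rw [← hd0, hdot, h]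
  have e11 : v1 ⬝ᵥ v1 = 30 := by
    rw [hd0]; simp [hv1]; linarith [h6, h10, h14, hs6, hs10, hs14]
  have e44 : v4 ⬝ᵥ v4 = 30 := by
    rw [hd0]; simp [hv4]; linarith [h6, h10, h14, hs6, hs10, hs14]
  have e14 : v1 ⬝ᵥ v4 = 10 := by
    rw [hd0]; simp [hv1, hv4]; linarith [h6, h10, h14, hs6, hs10, hs14]
  have e22 : v2 ⬝ᵥ v2 = 1095/128 := by
    rw [hd0]; simp [hv2]; linarith [h6, h10, h14, hs6, hs10, hs14]
  have e33 : v3 ⬝ᵥ v3 = 1095/128 := by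
    rw [hd0]; simp [hv3]; linarith [h6, h10, h14, hs6, hs10, hs14]
  have e23 : v2 ⬝ᵥ v3 = 455/128 := by
    rw [hd0]; simp [hv2, hv3]; linarith [h6, h10, h14, hs6, hs10, hs14]
  have e12 : v1 ⬝ᵥ v2 = 95/8 := by
    rw [hd0]; simp [hv1, hv2]; linarith [h6, h10, h14, hs6, hs10, hs14]
  have e13 : v1 ⬝ᵥ v3 = 15/8 := by
    rw [hd0]; simp [hv1, hv3]; linarith [h6, h10, h14, hs6, hs10, hs14]
  have e42 : v4 ⬝ᵥ v2 = 15/8 := by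
    rw [hd0]; simp [hv4, hv2]; linarith [h6, h10, h14, hs6, hs10, hs14]
  have e43 : v4 ⬝ᵥ v3 = 95/8 := by
    rw [hd0]; simp [hv4, hv3]; linarith [h6, h10, h14, hs6, hs10, hs14]
  refine main12 ((Q.mulVec v1) 0) ((Q.mulVec v1) 1) ((Q.mulVec v1) 2)
      ((Q.mulVec v2) 0) ((Q.mulVec v2) 1) ((Q.mulVec v2) 2)
      ((Q.mulVec v3) 0) ((Q.mulVec v3) 1) ((Q.mulVec v3) 2)
      ((Q.mulVec v4) 0) ((Q.mulVec v4) 1) ((Q.mulVec v4) 2)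
      (hw1 0) (hw1 1) (hw1 2) (hw2 0) (hw2 1) (hw2 2)
      (hw3 0) (hw3 1) (hw3 2) (hw4 0) (hw4 1) (hw4 2)
      ?_ ?_ ?_ ?_ ?_ ?_ ?_ ?_ ?_ ?_
  · have := key v1 v1 30 e11; linear_combination this
  · have := key v4 v4 30 e44; linear_combination this
  · have := key v1 v4 10 e14; linear_combination this
  · have := key v2 v2 (1095/128) e22; linear_combination this
  · have := key v3 v3 (1095/128) e33; linear_combination this
  · have := key v2 v3 (455/128) e23; linear_combination this
  · have := key v1 v2 (95/8) e12; linear_combination this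
  · have := key v1 v3 (15/8) e13; linear_combination this
  · have := key v4 v2 (15/8) e42; linear_combination this
  · have := key v4 v3 (95/8) e43; linear_combination this
end

section
/- The four vectors u₁ = (2, 0, 0), u₂ = (0, 2, 0), u₃ = (1, 1, √2), u₄ = (1, 1, −√2) in ℝ³ satisfy ⟨u_i, u_j⟩ ≥ 0 for all i, j, yet there is no orthogonal linear map Q of ℝ³ such that Qu_i ≥ 0 for all i ∈ {1,2,3,4}. -/
open Matrix

/-- The vertices of half a regular octahedron. -/
noncomputable def pyramidVecs : Fin 4 → (Fin 3 → ℝ) :=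
  ![![2, 0, 0], ![0, 2, 0], ![1, 1, Real.sqrt 2], ![1, 1, -Real.sqrt 2]]

lemma sqrt2_sq : Real.sqrt 2 * Real.sqrt 2 = 2 := Real.mul_self_sqrt (by norm_num)

lemma ortho_preserves_dot {Q : Matrix (Fin 3) (Fin 3) ℝ}
    (hQ : Q ∈ Matrix.orthogonalGroup (Fin 3) ℝ) (x y : Fin 3 → ℝ) :
    (Q *ᵥ x) ⬝ᵥ (Q *ᵥ y) = x ⬝ᵥ y := by
  have h : Qᵀ * Q = 1 := by
    have := (Matrix.mem_unitaryGroup_iff').mp hQ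
    simpa [Matrix.star_eq_conjTranspose] using this
  rw [Matrix.dotProduct_mulVec, Matrix.vecMul_mulVec, h, Matrix.vecMul_one]

/-- If two nonnegative vectors have zero dot product, each coordinatewise product is zero. -/
lemma zero_dot {a b : Fin 3 → ℝ} (ha : 0 ≤ a) (hb : 0 ≤ b) (h : a ⬝ᵥ b = 0) (k : Fin 3) :
    a k * b k = 0 := by
  have h' : a 0 * b 0 + a 1 * b 1 + a 2 * b 2 = 0 := by
    simpa [dotProduct, Fin.sum_univ_three] using h
  have h0 : 0 ≤ a 0 * b 0 := mul_nonneg (ha 0) (hb 0)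
  have h1 : 0 ≤ a 1 * b 1 := mul_nonneg (ha 1) (hb 1)
  have h2 : 0 ≤ a 2 * b 2 := mul_nonneg (ha 2) (hb 2)
  have e0 : a 0 * b 0 = 0 := by linarith
  have e1 : a 1 * b 1 = 0 := by linarith
  have e2 : a 2 * b 2 = 0 := by linarith
  fin_cases k <;> first | exact e0 | exact e1 | exact e2

lemma pos_dot {a b : Fin 3 → ℝ} (ha : 0 ≤ a) (hb : 0 ≤ b) (h : 0 < a ⬝ᵥ b) :
    ∃ k, 0 < a k ∧ 0 < b k := by
  by_contra hc
  push_neg at hc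
  have key : ∀ k, a k * b k = 0 := by
    intro k
    rcases lt_or_ge 0 (a k) with h1 | h1
    · have := hc k h1
      have := hb k
      have : b k = 0 := le_antisymm ‹b k ≤ 0› ‹0 ≤ b k›
      simp [this]
    · have : a k = 0 := le_antisymm h1 (ha k)
      simp [this]
  have : a ⬝ᵥ b = 0 := by
    simp [dotProduct, Fin.sum_univ_three, key 0, key 1, key 2]
  linarith

theorem pyramid_nonneg_gram_but_not_embeddable :
    (∀ i j, 0 ≤ pyramidVecs i ⬝ᵥ pyramidVecs j) ∧
    ¬ ∃ Q ∈ Matrix.orthogonalGroup (Fin 3) ℝ, ∀ i, 0 ≤ Q.mulVec (pyramidVecs i) := by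
  constructor
  · intro i j
    fin_cases i <;> fin_cases j <;>
      simp [pyramidVecs, dotProduct, Fin.sum_univ_three] <;>
      nlinarith [sqrt2_sq, Real.sqrt_nonneg 2]
  · rintro ⟨Q, hQ, hpos⟩
    set a := Q *ᵥ (pyramidVecs 0) with ha'
    set b := Q *ᵥ (pyramidVecs 1) with hb'
    set c := Q *ᵥ (pyramidVecs 2) with hc'
    set d := Q *ᵥ (pyramidVecs 3) with hd'
    have ha : 0 ≤ a := hpos 0
    have hb : 0 ≤ b := hpos 1
    have hc : 0 ≤ c := hpos 2
    have hd : 0 ≤ d := hpos 3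
    have hab : a ⬝ᵥ b = 0 := by
      rw [ha', hb', ortho_preserves_dot hQ]
      simp [pyramidVecs, dotProduct, Fin.sum_univ_three]
    have hcd : c ⬝ᵥ d = 0 := by
      rw [hc', hd', ortho_preserves_dot hQ]
      simp [pyramidVecs, dotProduct, Fin.sum_univ_three]
      nlinarith [sqrt2_sq]
    have hac : 0 < a ⬝ᵥ c := by
      rw [ha', hc', ortho_preserves_dot hQ]
      simp [pyramidVecs, dotProduct, Fin.sum_univ_three]
    have had : 0 < a ⬝ᵥ d := by
      rw [ha', hd', ortho_preserves_dot hQ]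
      simp [pyramidVecs, dotProduct, Fin.sum_univ_three]
    have hbc : 0 < b ⬝ᵥ c := by
      rw [hb', hc', ortho_preserves_dot hQ]
      simp [pyramidVecs, dotProduct, Fin.sum_univ_three]
    have hbd : 0 < b ⬝ᵥ d := by
      rw [hb', hd', ortho_preserves_dot hQ]
      simp [pyramidVecs, dotProduct, Fin.sum_univ_three]
    obtain ⟨i, hai, hci⟩ := pos_dot ha hc hac
    obtain ⟨j, haj, hdj⟩ := pos_dot ha hd had
    obtain ⟨k, hbk, hck⟩ := pos_dot hb hc hbc
    obtain ⟨l, hbl, hdl⟩ := pos_dot hb hd hbd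
    -- derive zeros
    have hbi : b i = 0 :=
      (mul_eq_zero.mp (zero_dot ha hb hab i)).resolve_left (ne_of_gt hai)
    have hdi : d i = 0 :=
      (mul_eq_zero.mp (zero_dot hc hd hcd i)).resolve_left (ne_of_gt hci)
    have hbj : b j = 0 :=
      (mul_eq_zero.mp (zero_dot ha hb hab j)).resolve_left (ne_of_gt haj)
    have hcj : c j = 0 :=
      (mul_eq_zero.mp (zero_dot hc hd hcd j)).resolve_right (ne_of_gt hdj)
    have hak : a k = 0 :=
      (mul_eq_zero.mp (zero_dot ha hb hab k)).resolve_right (ne_of_gt hbk)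
    have hdk : d k = 0 :=
      (mul_eq_zero.mp (zero_dot hc hd hcd k)).resolve_left (ne_of_gt hck)
    have hij : i ≠ j := fun h => by rw [h] at hdi; linarith
    have hik : i ≠ k := fun h => by rw [h] at hbi; linarith
    have hil : i ≠ l := fun h => by rw [h] at hbi; linarith
    have hjk : j ≠ k := fun h => by rw [h] at hcj; linarith
    have hjl : j ≠ l := fun h => by rw [h] at hbj; linarith
    have hkl : k ≠ l := fun h => by rw [h] at hdk; linarith
    have := i.isLt; have := j.isLt; have := k.isLt; have := l.isLt
    have h1 : (i : ℕ) ≠ j := Fin.val_ne_of_ne hij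
    have h2 : (i : ℕ) ≠ k := Fin.val_ne_of_ne hik
    have h3 : (i : ℕ) ≠ l := Fin.val_ne_of_ne hil
    have h4 : (j : ℕ) ≠ k := Fin.val_ne_of_ne hjk
    have h5 : (j : ℕ) ≠ l := Fin.val_ne_of_ne hjl
    have h6 : (k : ℕ) ≠ l := Fin.val_ne_of_ne hkl
    omega
end

section
/- Let φ₂(x) = (√6/4)(x²−1), φ₃(x) = (√10/4)·x·(x²−1), φ₄(x) = (√14/16)(5x²−1)(x²−1). Then for all x, y ∈ [−1, 1] one has φ₂(x)φ₂(y) + φ₃(x)φ₃(y) + φ₄(x)φ₄(y) ≥ 0. -/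
theorem lobatto_inner_products_nonneg :
    ∀ x ∈ Set.Icc (-1 : ℝ) 1, ∀ y ∈ Set.Icc (-1 : ℝ) 1,
      0 ≤ (Real.sqrt 6 / 4 * (x ^ 2 - 1)) * (Real.sqrt 6 / 4 * (y ^ 2 - 1)) +
          (Real.sqrt 10 / 4 * x * (x ^ 2 - 1)) * (Real.sqrt 10 / 4 * y * (y ^ 2 - 1)) +
          (Real.sqrt 14 / 16 * (5 * x ^ 2 - 1) * (x ^ 2 - 1)) *
            (Real.sqrt 14 / 16 * (5 * y ^ 2 - 1) * (y ^ 2 - 1)) := by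
  intro x hx y hy
  obtain ⟨hx1, hx2⟩ := hx
  obtain ⟨hy1, hy2⟩ := hy
  have h6 : Real.sqrt 6 * Real.sqrt 6 = 6 := Real.mul_self_sqrt (by norm_num)
  have h10 : Real.sqrt 10 * Real.sqrt 10 = 10 := Real.mul_self_sqrt (by norm_num)
  have h14 : Real.sqrt 14 * Real.sqrt 14 = 14 := Real.mul_self_sqrt (by norm_num)
  generalize Real.sqrt 6 = a at h6 ⊢
  generalize Real.sqrt 10 = b at h10 ⊢
  generalize Real.sqrt 14 = c at h14 ⊢
  have heq : (a / 4 * (x ^ 2 - 1)) * (a / 4 * (y ^ 2 - 1)) +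
          (b / 4 * x * (x ^ 2 - 1)) * (b / 4 * y * (y ^ 2 - 1)) +
          (c / 16 * (5 * x ^ 2 - 1) * (x ^ 2 - 1)) *
            (c / 16 * (5 * y ^ 2 - 1) * (y ^ 2 - 1)) =
      6 / 16 * ((x ^ 2 - 1) * (y ^ 2 - 1)) +
      10 / 16 * (x * y * ((x ^ 2 - 1) * (y ^ 2 - 1))) +
      14 / 256 * ((5 * x ^ 2 - 1) * (5 * y ^ 2 - 1) * ((x ^ 2 - 1) * (y ^ 2 - 1))) := by
    rw [← h6, ← h10, ← h14]; ring
  rw [heq]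
  have hu : 0 ≤ 1 - x ^ 2 := by nlinarith
  have hv : 0 ≤ 1 - y ^ 2 := by nlinarith
  have huv : 0 ≤ (1 - x ^ 2) * (1 - y ^ 2) := mul_nonneg hu hv
  nlinarith [mul_nonneg huv (sq_nonneg (1 + 2 * x * y)), mul_nonneg huv (sq_nonneg (x * y)),
    sq_nonneg ((1 - x ^ 2) * (1 - y ^ 2))]
end

section
/- For every two-dimensional linear subspace H of ℝ³ there exists a linear isometry f : H → ℝ² such that f maps H ∩ ℝ³≥0 into ℝ²≥0. -/
open Complex Real Set RealInnerProductSpace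

noncomputable def mulLI (u : ℂ) (hu : ‖u‖ = 1) : ℂ →ₗᵢ[ℝ] ℂ where
  toLinearMap := LinearMap.mul ℝ ℂ u
  norm_map' := fun z => by
    simp [map_mul, hu]

lemma diam_aux {z w : ℂ} (hz : z ≠ 0) (hw : w ≠ 0)
    (h : 0 ≤ (z * (starRingEnd ℂ) w).re)
    (hz2 : |Complex.arg z| ≤ π / 2) (hw2 : |Complex.arg w| ≤ π / 2) :
    Complex.arg z - Complex.arg w ≤ π / 2 := by
  have hzw : (0:ℝ) ≤ (z / w).re := by
    have h' : 0 ≤ z.re * w.re + z.im * w.im := by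
      simpa [Complex.mul_re, Complex.conj_re, Complex.conj_im] using h
    rw [Complex.div_re, ← add_div]
    exact div_nonneg h' (Complex.normSq_nonneg w)
  have harg : |Complex.arg (z / w)| ≤ π / 2 := Complex.abs_arg_le_pi_div_two_iff.2 hzw
  by_contra hcon
  push_neg at hcon
  have hd : Complex.arg z - Complex.arg w ∈ Set.Ioc (-π) π := by
    constructor
    · nlinarith [Real.pi_pos, abs_le.1 hz2, abs_le.1 hw2]
    · nlinarith [Real.pi_pos, abs_le.1 hz2, abs_le.1 hw2]
  have hangle : ((Complex.arg (z / w) : Real.Angle))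
      = ((Complex.arg z - Complex.arg w : ℝ) : Real.Angle) := by
    rw [Complex.arg_div_coe_angle hz hw]; rfl
  have : Complex.arg (z / w) = Complex.arg z - Complex.arg w := by
    have e1 : ((Complex.arg (z / w) : Real.Angle)).toReal = Complex.arg (z / w) :=
      Real.Angle.toReal_coe_eq_self_iff_mem_Ioc.2 (Complex.arg_mem_Ioc _)
    have e2 : (((Complex.arg z - Complex.arg w : ℝ) : Real.Angle)).toReal
        = Complex.arg z - Complex.arg w :=
      Real.Angle.toReal_coe_eq_self_iff_mem_Ioc.2 hd
    rw [← e1, hangle, e2]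
  nlinarith [abs_le.1 harg]

lemma key (C : Set ℂ) (hC : ∀ z ∈ C, ∀ w ∈ C, 0 ≤ (z * (starRingEnd ℂ) w).re) :
    ∃ u : ℂ, ‖u‖ = 1 ∧ ∀ z ∈ C, 0 ≤ (u * z).re ∧ 0 ≤ (u * z).im := by
  by_cases h0 : ∀ z ∈ C, z = 0
  · exact ⟨1, by simp, fun z hz => by simp [h0 z hz]⟩
  push_neg at h0
  obtain ⟨z0, hz0C, hz0⟩ := h0
  set φ : ℂ → ℝ := fun z => Complex.arg (z * (starRingEnd ℂ) z0) with hφ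
  set A : Set ℝ := φ '' (C \ {0}) with hA
  have hz0' : (starRingEnd ℂ) z0 ≠ 0 := by simpa using hz0
  have hmemA : ∀ z ∈ C, z ≠ 0 → φ z ∈ A := fun z hz hz' => ⟨z, ⟨hz, hz'⟩, rfl⟩
  have hbd : ∀ a ∈ A, -(π/2) ≤ a := by
    rintro a ⟨z, ⟨hzC, hzne⟩, rfl⟩
    have := Complex.abs_arg_le_pi_div_two_iff.2 (hC z hzC z0 hz0C)
    linarith [(abs_le.1 this).1]
  have hAne : A.Nonempty := ⟨φ z0, hmemA z0 hz0C hz0⟩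
  have hbdd : BddBelow A := ⟨-(π/2), hbd⟩
  set α := sInf A with hα
  -- diameter: for z, w nonzero in C, φ z - φ w ≤ π/2
  have hdiam : ∀ z ∈ C, z ≠ 0 → ∀ w ∈ C, w ≠ 0 → φ z - φ w ≤ π / 2 := by
    intro z hzC hzne w hwC hwne
    have haz : z * (starRingEnd ℂ) z0 ≠ 0 := mul_ne_zero hzne hz0'
    have hbz : w * (starRingEnd ℂ) z0 ≠ 0 := mul_ne_zero hwne hz0'
    have hre : 0 ≤ ((z * (starRingEnd ℂ) z0) * (starRingEnd ℂ) (w * (starRingEnd ℂ) z0)).re := by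
      have h5 : z0 * (starRingEnd ℂ) z0 = (Complex.normSq z0 : ℂ) := Complex.mul_conj z0
      have : (z * (starRingEnd ℂ) z0) * (starRingEnd ℂ) (w * (starRingEnd ℂ) z0)
          = (Complex.normSq z0 : ℝ) * (z * (starRingEnd ℂ) w) := by
        rw [map_mul, Complex.conj_conj]
        linear_combination (z * (starRingEnd ℂ) w) * h5
      rw [this, Complex.re_ofReal_mul]
      exact mul_nonneg (Complex.normSq_nonneg z0) (hC z hzC w hwC)
    have hargz : |Complex.arg (z * (starRingEnd ℂ) z0)| ≤ π / 2 :=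
      Complex.abs_arg_le_pi_div_two_iff.2 (hC z hzC z0 hz0C)
    have hargw : |Complex.arg (w * (starRingEnd ℂ) z0)| ≤ π / 2 :=
      Complex.abs_arg_le_pi_div_two_iff.2 (hC w hwC z0 hz0C)
    exact diam_aux haz hbz hre hargz hargw
  have hlow : ∀ z ∈ C, z ≠ 0 → α ≤ φ z := fun z hz hz' => csInf_le hbdd (hmemA z hz hz')
  have hup : ∀ z ∈ C, z ≠ 0 → φ z ≤ α + π / 2 := by
    intro z hz hz'
    have : φ z - π / 2 ≤ α := by
      apply le_csInf hAne
      rintro a ⟨w, ⟨hwC, hwne⟩, rfl⟩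
      linarith [hdiam z hz hz' w hwC hwne]
    linarith
  refine ⟨(‖z0‖ : ℂ)⁻¹ * (Complex.exp (-(α:ℂ) * Complex.I) * (starRingEnd ℂ) z0),
    ?_, ?_⟩
  · rw [norm_mul, norm_mul, norm_inv, Complex.norm_exp, Complex.norm_real, Real.norm_eq_abs, Complex.norm_conj]
    have : (-(α:ℂ) * Complex.I).re = 0 := by simp
    rw [this, Real.exp_zero, _root_.abs_of_nonneg (norm_nonneg z0),
      one_mul, inv_mul_cancel₀ (norm_ne_zero_iff.mpr hz0)]
  · intro z hzC
    by_cases hzne : z = 0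
    · simp [hzne]
    set a := z * (starRingEnd ℂ) z0 with ha
    have hane : a ≠ 0 := mul_ne_zero hzne hz0'
    have key1 : (‖z0‖ : ℂ)⁻¹ * (Complex.exp (-(α:ℂ) * Complex.I) * (starRingEnd ℂ) z0) * z
        = ((‖z0‖)⁻¹ * ‖a‖ : ℝ) *
          Complex.exp (((φ z - α : ℝ) : ℂ) * Complex.I) := by
      have hpolar : (‖a‖ : ℂ) * Complex.exp ((φ z : ℂ) * Complex.I) = a :=
        Complex.norm_mul_exp_arg_mul_I a
      push_cast
      rw [show ((φ z : ℂ) - (α:ℂ)) * Complex.I = (φ z : ℂ) * Complex.I + (-(α:ℂ)) * Complex.I by ring,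
        Complex.exp_add]
      calc (↑(‖z0‖))⁻¹ * (Complex.exp (-(α:ℂ) * Complex.I) * (starRingEnd ℂ) z0) * z
          = (↑(‖z0‖))⁻¹ * Complex.exp (-(α:ℂ) * Complex.I) * a := by rw [ha]; ring
        _ = (↑(‖z0‖))⁻¹ * Complex.exp (-(α:ℂ) * Complex.I) *
              ((‖a‖ : ℂ) * Complex.exp ((φ z : ℂ) * Complex.I)) := by rw [hpolar]
        _ = (↑(‖z0‖))⁻¹ * ↑(‖a‖) *
              (Complex.exp ((φ z:ℂ) * Complex.I) * Complex.exp (-(α:ℂ) * Complex.I)) := by ring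
    have hrange : 0 ≤ φ z - α ∧ φ z - α ≤ π / 2 := by
      constructor
      · linarith [hlow z hzC hzne]
      · linarith [hup z hzC hzne]
    have hcos : 0 ≤ Real.cos (φ z - α) :=
      Real.cos_nonneg_of_mem_Icc ⟨by linarith [hrange.1, Real.pi_pos], hrange.2⟩
    have hsin : 0 ≤ Real.sin (φ z - α) :=
      Real.sin_nonneg_of_nonneg_of_le_pi hrange.1 (by linarith [hrange.2, Real.pi_pos])
    have habs : 0 ≤ (‖z0‖)⁻¹ * ‖a‖ :=
      mul_nonneg (inv_nonneg.2 (norm_nonneg _)) (norm_nonneg _)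
    constructor
    · rw [key1, Complex.re_ofReal_mul, Complex.exp_ofReal_mul_I_re]
      exact mul_nonneg habs hcos
    · rw [key1, Complex.im_ofReal_mul, Complex.exp_ofReal_mul_I_im]
      exact mul_nonneg habs hsin

theorem plane_section_of_octant_fits_in_quadrant
    (H : Submodule ℝ (EuclideanSpace ℝ (Fin 3))) (hH : Module.finrank ℝ H = 2) :
    ∃ f : H →ₗᵢ[ℝ] EuclideanSpace ℝ (Fin 2),
      ∀ x : H, (∀ i, 0 ≤ (x : EuclideanSpace ℝ (Fin 3)) i) → ∀ i, 0 ≤ f x i := by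
  -- isometry equiv H ≃ ℂ
  let b := (stdOrthonormalBasis ℝ H).reindex (finCongr hH)
  let eH : H ≃ₗᵢ[ℝ] ℂ := b.repr.trans Complex.orthonormalBasisOneI.repr.symm
  set C : Set ℂ := eH '' {x : H | ∀ i, 0 ≤ (x : EuclideanSpace ℝ (Fin 3)) i} with hCdef
  have hC : ∀ z ∈ C, ∀ w ∈ C, 0 ≤ (z * (starRingEnd ℂ) w).re := by
    rintro z ⟨x, hx, rfl⟩ w ⟨y, hy, rfl⟩
    have h1 : ((starRingEnd ℂ) (eH y) * eH x).re = ⟪eH y, eH x⟫ := by rw [mul_comm]; exact (Complex.inner _ _).symm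
    have h2 : ⟪eH y, eH x⟫ = ⟪y, x⟫ := eH.inner_map_map y x
    have h3 : ⟪y, x⟫ = ⟪(y : EuclideanSpace ℝ (Fin 3)), (x : EuclideanSpace ℝ (Fin 3))⟫ :=
      H.coe_inner y x
    have h4 : (0:ℝ) ≤ ⟪(y : EuclideanSpace ℝ (Fin 3)), (x : EuclideanSpace ℝ (Fin 3))⟫ := by
      rw [PiLp.inner_apply]
      exact Finset.sum_nonneg fun i _ => mul_nonneg (hx i) (hy i)
    have : (eH x * (starRingEnd ℂ) (eH y)).re = ((starRingEnd ℂ) (eH y) * eH x).re := by ring_nf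
    rw [this, h1, h2, h3]; exact h4
  obtain ⟨u, hu, hquad⟩ := key C hC
  refine ⟨(Complex.orthonormalBasisOneI.repr.toLinearIsometry.comp
      ((mulLI u hu).comp eH.toLinearIsometry)), ?_⟩
  intro x hx i
  have hz : eH x ∈ C := ⟨x, hx, rfl⟩
  obtain ⟨hre, him⟩ := hquad (eH x) hz
  have : (Complex.orthonormalBasisOneI.repr.toLinearIsometry.comp
      ((mulLI u hu).comp eH.toLinearIsometry)) x
      = Complex.orthonormalBasisOneI.repr (u * eH x) := rfl
  rw [this, Complex.orthonormalBasisOneI_repr_apply]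
  fin_cases i
  · simpa using hre
  · simpa using him
end

section
/- There exists a three-dimensional linear subspace H of ℝ⁴ — for instance the span of (√2, √2, 0, 0), (0, 0, √2, √2), (0, √2, √2, 0), (√2, 0, 0, √2) — such that no linear isometry f : H → ℝ³ maps H ∩ ℝ⁴≥0 into ℝ³≥0. -/
open scoped InnerProductSpace

noncomputable def octV1 : EuclideanSpace ℝ (Fin 4) :=
  (WithLp.equiv 2 (Fin 4 → ℝ)).symm ![Real.sqrt 2, Real.sqrt 2, 0, 0]
noncomputable def octV2 : EuclideanSpace ℝ (Fin 4) :=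
  (WithLp.equiv 2 (Fin 4 → ℝ)).symm ![0, 0, Real.sqrt 2, Real.sqrt 2]
noncomputable def octV3 : EuclideanSpace ℝ (Fin 4) :=
  (WithLp.equiv 2 (Fin 4 → ℝ)).symm ![0, Real.sqrt 2, Real.sqrt 2, 0]
noncomputable def octV4 : EuclideanSpace ℝ (Fin 4) :=
  (WithLp.equiv 2 (Fin 4 → ℝ)).symm ![Real.sqrt 2, 0, 0, Real.sqrt 2]

lemma octV4_eq : octV4 = octV1 + octV2 - octV3 := by
  apply PiLp.ext
  intro i
  fin_cases i <;>
    simp [octV1, octV2, octV3, octV4, PiLp.add_apply, PiLp.sub_apply] <;> ring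

lemma octV_li : LinearIndependent ℝ ![octV1, octV2, octV3] := by
  have hspos : (0:ℝ) < Real.sqrt 2 := Real.sqrt_pos.mpr (by norm_num)
  rw [Fintype.linearIndependent_iff]
  intro g hg
  rw [Fin.sum_univ_three] at hg
  have key : ∀ j : Fin 4, g 0 * (octV1 j) + g 1 * (octV2 j) + g 2 * (octV3 j) = 0 := by
    intro j
    have := congrArg (fun x : EuclideanSpace ℝ (Fin 4) => x j) hg
    simpa [PiLp.add_apply, PiLp.smul_apply, smul_eq_mul] using this
  have e0 := key 0
  have e2 := key 2
  have e3 := key 3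
  simp [octV1, octV2, octV3] at e0 e2 e3
  have hg0 : g 0 = 0 := by nlinarith [e0, hspos]
  have hg1 : g 1 = 0 := by nlinarith [e3, hspos]
  have hg2 : g 2 = 0 := by nlinarith [e2, hspos, e3]
  intro i
  fin_cases i
  · exact hg0
  · exact hg1
  · exact hg2

lemma oct_nonneg1 : ∀ i, 0 ≤ octV1 i := by
  intro i; fin_cases i <;> simp [octV1] <;> exact Real.sqrt_nonneg 2
lemma oct_nonneg2 : ∀ i, 0 ≤ octV2 i := by
  intro i; fin_cases i <;> simp [octV2] <;> exact Real.sqrt_nonneg 2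
lemma oct_nonneg3 : ∀ i, 0 ≤ octV3 i := by
  intro i; fin_cases i <;> simp [octV3] <;> exact Real.sqrt_nonneg 2
lemma oct_nonneg4 : ∀ i, 0 ≤ octV4 i := by
  intro i; fin_cases i <;> simp [octV4] <;> exact Real.sqrt_nonneg 2

lemma oct_s12 : (∑ i, octV1 i * octV2 i) = 0 := by
  simp [octV1, octV2, Fin.sum_univ_four]
lemma oct_s34 : (∑ i, octV3 i * octV4 i) = 0 := by
  simp [octV3, octV4, Fin.sum_univ_four]
lemma oct_s13 : (∑ i, octV1 i * octV3 i) = 2 := by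
  have h2 : Real.sqrt 2 * Real.sqrt 2 = 2 := Real.mul_self_sqrt (by norm_num)
  simp [octV1, octV3, Fin.sum_univ_four, h2]
lemma oct_s23 : (∑ i, octV2 i * octV3 i) = 2 := by
  have h2 : Real.sqrt 2 * Real.sqrt 2 = 2 := Real.mul_self_sqrt (by norm_num)
  simp [octV2, octV3, Fin.sum_univ_four, h2]
lemma oct_s14 : (∑ i, octV1 i * octV4 i) = 2 := by
  have h2 : Real.sqrt 2 * Real.sqrt 2 = 2 := Real.mul_self_sqrt (by norm_num)
  simp [octV1, octV4, Fin.sum_univ_four, h2]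
lemma oct_s24 : (∑ i, octV2 i * octV4 i) = 2 := by
  have h2 : Real.sqrt 2 * Real.sqrt 2 = 2 := Real.mul_self_sqrt (by norm_num)
  simp [octV2, octV4, Fin.sum_univ_four, h2]

lemma oct_inner_sum {H : Submodule ℝ (EuclideanSpace ℝ (Fin 4))}
    (f : H →ₗᵢ[ℝ] EuclideanSpace ℝ (Fin 3)) (x y : H) :
    (∑ i, f x i * f y i)
      = ∑ i, (x : EuclideanSpace ℝ (Fin 4)) i * (y : EuclideanSpace ℝ (Fin 4)) i := by
  have h := f.inner_map_map x y
  rw [Submodule.coe_inner] at h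
  rw [PiLp.inner_apply, PiLp.inner_apply] at h
  simpa [RCLike.inner_apply, conj_trivial, mul_comm] using h

lemma oct_combinatorial (w1 w2 w3 w4 : EuclideanSpace ℝ (Fin 3))
    (hw1 : ∀ i, 0 ≤ w1 i) (hw2 : ∀ i, 0 ≤ w2 i)
    (hw3 : ∀ i, 0 ≤ w3 i) (hw4 : ∀ i, 0 ≤ w4 i)
    (s12 : (∑ i, w1 i * w2 i) = 0) (s34 : (∑ i, w3 i * w4 i) = 0)
    (s13 : (∑ i, w1 i * w3 i) = 2) (s23 : (∑ i, w2 i * w3 i) = 2)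
    (s14 : (∑ i, w1 i * w4 i) = 2) (s24 : (∑ i, w2 i * w4 i) = 2) : False := by
  have exPos : ∀ a b : EuclideanSpace ℝ (Fin 3), (∀ i, 0 ≤ a i) → (∀ i, 0 ≤ b i) →
      (∑ i, a i * b i) = 2 → ∃ i, 0 < a i ∧ 0 < b i := by
    intro a b ha hb hsum
    by_contra h
    push_neg at h
    have hz : ∀ i ∈ Finset.univ, a i * b i = 0 := by
      intro i _
      rcases (ha i).lt_or_eq with h1 | h1
      · have hbz : b i = 0 := le_antisymm (h i h1) (hb i)
        simp [hbz]
      · simp [← h1]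
    rw [Finset.sum_eq_zero hz] at hsum
    norm_num at hsum
  have zeroProd : ∀ a b : EuclideanSpace ℝ (Fin 3), (∀ i, 0 ≤ a i) → (∀ i, 0 ≤ b i) →
      (∑ i, a i * b i) = 0 → ∀ i, a i * b i = 0 := by
    intro a b ha hb hsum i
    exact (Finset.sum_eq_zero_iff_of_nonneg
      (fun j _ => mul_nonneg (ha j) (hb j))).mp hsum i (Finset.mem_univ i)
  have z12 := zeroProd w1 w2 hw1 hw2 s12
  have z34 := zeroProd w3 w4 hw3 hw4 s34
  obtain ⟨i, hi1, hi3⟩ := exPos w1 w3 hw1 hw3 s13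
  obtain ⟨j, hj2, hj3⟩ := exPos w2 w3 hw2 hw3 s23
  obtain ⟨k, hk1, hk4⟩ := exPos w1 w4 hw1 hw4 s14
  obtain ⟨l, hl2, hl4⟩ := exPos w2 w4 hw2 hw4 s24
  have hij : i ≠ j := fun h => by subst h; exact (mul_pos hi1 hj2).ne' (z12 i)
  have hkl : k ≠ l := fun h => by subst h; exact (mul_pos hk1 hl2).ne' (z12 k)
  have hik : i ≠ k := fun h => by subst h; exact (mul_pos hi3 hk4).ne' (z34 i)
  have hil : i ≠ l := fun h => by subst h; exact (mul_pos hi3 hl4).ne' (z34 i)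
  have hjk : j ≠ k := fun h => by subst h; exact (mul_pos hj3 hk4).ne' (z34 j)
  have hjl : j ≠ l := fun h => by subst h; exact (mul_pos hj3 hl4).ne' (z34 j)
  have b1 := i.isLt; have b2 := j.isLt; have b3 := k.isLt; have b4 := l.isLt
  have h1 := Fin.val_ne_of_ne hij
  have h2 := Fin.val_ne_of_ne hkl
  have h3 := Fin.val_ne_of_ne hik
  have h4 := Fin.val_ne_of_ne hil
  have h5 := Fin.val_ne_of_ne hjk
  have h6 := Fin.val_ne_of_ne hjl
  omega

lemma oct_span_eq :
    Submodule.span ℝ ({octV1, octV2, octV3, octV4} : Set (EuclideanSpace ℝ (Fin 4)))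
      = Submodule.span ℝ (Set.range ![octV1, octV2, octV3]) := by
  apply le_antisymm
  · rw [Submodule.span_le]
    intro x hx
    have m1 : octV1 ∈ Set.range ![octV1, octV2, octV3] := ⟨0, rfl⟩
    have m2 : octV2 ∈ Set.range ![octV1, octV2, octV3] := ⟨1, rfl⟩
    have m3 : octV3 ∈ Set.range ![octV1, octV2, octV3] := ⟨2, rfl⟩
    rcases hx with rfl | rfl | rfl | rfl
    · exact Submodule.subset_span m1
    · exact Submodule.subset_span m2
    · exact Submodule.subset_span m3
    · rw [octV4_eq]
      exact sub_mem (add_mem (Submodule.subset_span m1) (Submodule.subset_span m2))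
        (Submodule.subset_span m3)
  · rw [Submodule.span_le]
    rintro x ⟨i, rfl⟩
    fin_cases i
    · exact Submodule.subset_span (by simp)
    · exact Submodule.subset_span (by simp)
    · exact Submodule.subset_span (by simp)

lemma oct_finrank :
    Module.finrank ℝ
      (Submodule.span ℝ ({octV1, octV2, octV3, octV4} : Set (EuclideanSpace ℝ (Fin 4)))) = 3 := by
  rw [oct_span_eq, finrank_span_eq_card octV_li]
  simp

lemma oct_no_isometry :
    ¬ ∃ f : (Submodule.span ℝ ({octV1, octV2, octV3, octV4} :
        Set (EuclideanSpace ℝ (Fin 4)))) →ₗᵢ[ℝ] EuclideanSpace ℝ (Fin 3),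
      ∀ x : (Submodule.span ℝ ({octV1, octV2, octV3, octV4} :
        Set (EuclideanSpace ℝ (Fin 4)))),
        (∀ i, 0 ≤ (x : EuclideanSpace ℝ (Fin 4)) i) → ∀ i, 0 ≤ f x i := by
  rintro ⟨f, hf⟩
  have hm1 : octV1 ∈ Submodule.span ℝ ({octV1, octV2, octV3, octV4} :
      Set (EuclideanSpace ℝ (Fin 4))) := Submodule.subset_span (by simp)
  have hm2 : octV2 ∈ Submodule.span ℝ ({octV1, octV2, octV3, octV4} :
      Set (EuclideanSpace ℝ (Fin 4))) := Submodule.subset_span (by simp)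
  have hm3 : octV3 ∈ Submodule.span ℝ ({octV1, octV2, octV3, octV4} :
      Set (EuclideanSpace ℝ (Fin 4))) := Submodule.subset_span (by simp)
  have hm4 : octV4 ∈ Submodule.span ℝ ({octV1, octV2, octV3, octV4} :
      Set (EuclideanSpace ℝ (Fin 4))) := Submodule.subset_span (by simp)
  exact oct_combinatorial (f ⟨octV1, hm1⟩) (f ⟨octV2, hm2⟩) (f ⟨octV3, hm3⟩) (f ⟨octV4, hm4⟩)
    (hf ⟨octV1, hm1⟩ oct_nonneg1) (hf ⟨octV2, hm2⟩ oct_nonneg2)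
    (hf ⟨octV3, hm3⟩ oct_nonneg3) (hf ⟨octV4, hm4⟩ oct_nonneg4)
    ((oct_inner_sum f _ _).trans oct_s12)
    ((oct_inner_sum f _ _).trans oct_s34)
    ((oct_inner_sum f _ _).trans oct_s13)
    ((oct_inner_sum f _ _).trans oct_s23)
    ((oct_inner_sum f _ _).trans oct_s14)
    ((oct_inner_sum f _ _).trans oct_s24)

theorem hyperplane_section_of_R4_orthant_need_not_fit_in_octant :
    ∃ H : Submodule ℝ (EuclideanSpace ℝ (Fin 4)),
      Module.finrank ℝ H = 3 ∧
      H = Submodule.span ℝ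
        {(WithLp.equiv 2 (Fin 4 → ℝ)).symm ![Real.sqrt 2, Real.sqrt 2, 0, 0],
         (WithLp.equiv 2 (Fin 4 → ℝ)).symm ![0, 0, Real.sqrt 2, Real.sqrt 2],
         (WithLp.equiv 2 (Fin 4 → ℝ)).symm ![0, Real.sqrt 2, Real.sqrt 2, 0],
         (WithLp.equiv 2 (Fin 4 → ℝ)).symm ![Real.sqrt 2, 0, 0, Real.sqrt 2]} ∧
      ¬ ∃ f : H →ₗᵢ[ℝ] EuclideanSpace ℝ (Fin 3),
        ∀ x : H, (∀ i, 0 ≤ (x : EuclideanSpace ℝ (Fin 4)) i) → ∀ i, 0 ≤ f x i :=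
  ⟨Submodule.span ℝ ({octV1, octV2, octV3, octV4} : Set (EuclideanSpace ℝ (Fin 4))),
    oct_finrank, rfl, oct_no_isometry⟩
end

section
/- Let T ⊆ ℝ² be the closed equilateral triangle with vertices (0,0), (√2, 0), (√2/2, √6/2) (side length √2). Then T contains no square of side length √2/2: there do not exist points p, q, r, s ∈ T with ‖p−q‖ = ‖q−r‖ = ‖r−s‖ = ‖s−p‖ = √2/2 and ‖p−r‖ = ‖q−s‖ = 1. -/
set_option maxHeartbeats 1600000

lemma core_ineq (k s6 y a b : ℝ) (hk2 : k^2 = 3) (hk : 0 < k)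
    (h62 : s6^2 = 6) (h6 : 0 < s6)
    (ha : 0 ≤ a) (hb : 0 ≤ b) (hab : a^2 + b^2 = 1/2) (hy : 0 ≤ y)
    (hC0 : k*a + k*b + a + b + 2*y ≤ s6)
    (hC1 : k*a + 2*a + b + 2*y ≤ s6)
    (hC2 : k*b + a + 2*b + 2*y ≤ s6) : False := by
  have hk' : 5/4 < k := by nlinarith
  rcases le_or_gt (k*b) a with h | h
  · -- use C1
    have hc1 : k*a + 2*a + b ≤ s6 := by linarith
    have hC : 0 ≤ k*a + 2*a + b := by nlinarith [mul_nonneg hk.le ha]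
    have hCs : (k*a + 2*a + b)^2 ≤ 6 := by nlinarith [mul_nonneg (sub_nonneg.2 hc1) (by linarith : (0:ℝ) ≤ s6 + (k*a+2*a+b))]
    have hw : (a - (k+2)*b)^2 ≤ 1/2 := by
      nlinarith [mul_nonneg hb (sub_nonneg.2 h), mul_nonneg hk.le (mul_nonneg hb (sub_nonneg.2 h))]
    nlinarith [hw, hCs, hab, hk2]
  rcases le_or_gt (k*a) b with h' | h'
  · -- use C2
    have hc2 : k*b + 2*b + a ≤ s6 := by linarith
    have hC : 0 ≤ k*b + 2*b + a := by nlinarith [mul_nonneg hk.le hb]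
    have hCs : (k*b + 2*b + a)^2 ≤ 6 := by nlinarith [mul_nonneg (sub_nonneg.2 hc2) (by linarith : (0:ℝ) ≤ s6 + (k*b+2*b+a))]
    have hw : (b - (k+2)*a)^2 ≤ 1/2 := by
      nlinarith [mul_nonneg ha (sub_nonneg.2 h'), mul_nonneg hk.le (mul_nonneg ha (sub_nonneg.2 h'))]
    nlinarith [hw, hCs, hab, hk2]
  · -- use C0
    have hc0 : k*a + k*b + a + b ≤ s6 := by linarith
    have hC : 0 ≤ k*a + k*b + a + b := by nlinarith [mul_nonneg hk.le ha, mul_nonneg hk.le hb]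
    have hCs : (k*a + k*b + a + b)^2 ≤ 6 := by nlinarith [mul_nonneg (sub_nonneg.2 hc0) (by linarith : (0:ℝ) ≤ s6 + (k*a+k*b+a+b))]
    have hprod : 4*(a*b) ≥ k*(a^2+b^2) := by nlinarith [mul_nonneg (sub_nonneg.2 h.le) (sub_nonneg.2 h'.le)]
    nlinarith [hCs, hab, hk2, hprod]

lemma main_ineq (k s6 x y a b : ℝ) (hk2 : k^2 = 3) (hk : 0 < k)
    (h62 : s6^2 = 6) (h6 : 0 < s6) (hab : a^2 + b^2 = 1/2)
    (hA1 : 0 ≤ y) (hA2 : 0 ≤ y + b) (hA3 : 0 ≤ y + a + b) (hA4 : 0 ≤ y + a)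
    (hB1 : y ≤ k*x) (hB2 : y + b ≤ k*x + k*a)
    (hB3 : y + a + b ≤ k*x + k*a - k*b) (hB4 : y + a ≤ k*x - k*b)
    (hC1 : k*x + y ≤ s6) (hC2 : k*x + k*a + (y + b) ≤ s6)
    (hC3 : k*x + k*a - k*b + (y + a + b) ≤ s6) (hC4 : k*x - k*b + (y + a) ≤ s6) :
    False := by
  rcases le_or_gt 0 a with ha | ha <;> rcases le_or_gt 0 b with hb | hb
  · -- a ≥ 0, b ≥ 0 : params (y, a, b)
    exact core_ineq k s6 y a b hk2 hk h62 h6 ha hb hab hA1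
      (by linarith) (by linarith) (by linarith)
  · -- a ≥ 0, b < 0 : rotate: (y', a', b') = (y+b, -b, a)
    exact core_ineq k s6 (y+b) (-b) a hk2 hk h62 h6 (by linarith) ha
      (by linarith [hab]; ) (hA2)
      (by linarith) (by linarith) (by linarith)
  · -- a < 0, b ≥ 0 : rotate back: (y', a', b') = (y+a, b, -a)
    exact core_ineq k s6 (y+a) b (-a) hk2 hk h62 h6 hb (by linarith)
      (by linarith [hab]) (hA4)
      (by linarith) (by linarith) (by linarith)
  · -- a < 0, b < 0 : params (y+a+b, -a, -b)
    exact core_ineq k s6 (y+a+b) (-a) (-b) hk2 hk h62 h6 (by linarith) (by linarith)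
      (by linarith [hab]) (hA3)
      (by linarith) (by linarith) (by linarith)

lemma master_s19 (k s6 p0 p1 q0 q1 r0 r1 s0 s1 : ℝ)
    (hk2 : k^2 = 3) (hk : 0 < k) (h62 : s6^2 = 6) (h6 : 0 < s6)
    (hE1 : (p0-q0)^2 + (p1-q1)^2 = 1/2)
    (hE2 : (q0-r0)^2 + (q1-r1)^2 = 1/2)
    (hE3 : (r0-s0)^2 + (r1-s1)^2 = 1/2)
    (hE4 : (s0-p0)^2 + (s1-p1)^2 = 1/2)
    (hE5 : (p0-r0)^2 + (p1-r1)^2 = 1)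
    (hE6 : (q0-s0)^2 + (q1-s1)^2 = 1)
    (hPA : 0 ≤ p1) (hPB : p1 ≤ k*p0) (hPC : k*p0 + p1 ≤ s6)
    (hQA : 0 ≤ q1) (hQB : q1 ≤ k*q0) (hQC : k*q0 + q1 ≤ s6)
    (hRA : 0 ≤ r1) (hRB : r1 ≤ k*r0) (hRC : k*r0 + r1 ≤ s6)
    (hSA : 0 ≤ s1) (hSB : s1 ≤ k*s0) (hSC : k*s0 + s1 ≤ s6) : False := by
  have hO1 : (p0-q0)*(r0-q0) + (p1-q1)*(r1-q1) = 0 := by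
    linear_combination (hE1 + hE2 - hE5)/2
  have hO2 : (r0-s0)*(p0-s0) + (r1-s1)*(p1-s1) = 0 := by
    linear_combination (hE3 + hE4 - hE5)/2
  have hO3 : (q0-p0)*(s0-p0) + (q1-p1)*(s1-p1) = 0 := by
    linear_combination (hE1 + hE4 - hE6)/2
  have hO4 : (q0-r0)*(s0-r0) + (q1-r1)*(s1-r1) = 0 := by
    linear_combination (hE2 + hE3 - hE6)/2
  have hDe : (q0+s0-p0-r0)*(r0-p0) + (q1+s1-p1-r1)*(r1-p1) = 0 := by
    linear_combination hO3 - hO4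
  have hDf : (q0+s0-p0-r0)*(s0-q0) + (q1+s1-p1-r1)*(s1-q1) = 0 := by
    linear_combination hO2 - hO1
  have hperp : (r0-p0)*(s0-q0) + (r1-p1)*(s1-q1) = 0 := by
    linear_combination (hE2 - hE3 + hE4 - hE1)/2
  have hdet : ((r0-p0)*(s1-q1) - (r1-p1)*(s0-q0))^2 = 1 := by
    linear_combination ((s0-q0)^2+(s1-q1)^2) * hE5 + hE6
      - ((r0-p0)*(s0-q0)+(r1-p1)*(s1-q1)) * hperp
  have hd0 : (q0+s0-p0-r0) * ((r0-p0)*(s1-q1) - (r1-p1)*(s0-q0)) = 0 := by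
    linear_combination (s1-q1)*hDe - (r1-p1)*hDf
  have hd1 : (q1+s1-p1-r1) * ((r0-p0)*(s1-q1) - (r1-p1)*(s0-q0)) = 0 := by
    linear_combination (r0-p0)*hDf - (s0-q0)*hDe
  have hdne : ((r0-p0)*(s1-q1) - (r1-p1)*(s0-q0)) ≠ 0 := by
    intro h; rw [h] at hdet; norm_num at hdet
  have hr0 : r0 = q0 + s0 - p0 := by
    rcases mul_eq_zero.1 hd0 with h | h
    · linarith
    · exact absurd h hdne
  have hr1 : r1 = q1 + s1 - p1 := by
    rcases mul_eq_zero.1 hd1 with h | h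
    · linarith
    · exact absurd h hdne
  subst hr0; subst hr1
  -- u = q - p, v = s - p ; det2 = u0*v1 - u1*v0
  have hdet2 : ((q0-p0)*(s1-p1) - (q1-p1)*(s0-p0))^2 = 1/4 := by
    linear_combination ((s0-p0)^2+(s1-p1)^2) * hE1 + (1/2) * hE4
      - ((q0-p0)*(s0-p0)+(q1-p1)*(s1-p1)) * hO3
  set σ : ℝ := 2*((q0-p0)*(s1-p1) - (q1-p1)*(s0-p0)) with hσdef
  have hσ2 : σ^2 = 1 := by rw [hσdef]; linear_combination 4*hdet2
  have hv0 : s0 - p0 = -σ*(q1-p1) := by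
    rw [hσdef]; linear_combination 2*(q0-p0)*hO3 - 2*(s0-p0)*hE1
  have hv1 : s1 - p1 = σ*(q0-p0) := by
    rw [hσdef]; linear_combination 2*(q1-p1)*hO3 - 2*(s1-p1)*hE1
  have hcases : σ = 1 ∨ σ = -1 := by
    have h : (σ-1)*(σ+1) = 0 := by linear_combination hσ2
    rcases mul_eq_zero.1 h with h | h
    · left; linarith
    · right; linarith
  set a : ℝ := q0 - p0 with hadef
  set b : ℝ := q1 - p1 with hbdef
  have hab : a^2 + b^2 = 1/2 := by rw [hadef, hbdef]; linear_combination hE1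
  rcases hcases with h1 | h1
  · -- σ = 1 : q = p + (a,b), s = p + (-b, a), r = p + (a-b, a+b)
    have hs0 : s0 = p0 - b := by rw [h1] at hv0; linarith
    have hs1 : s1 = p1 + a := by rw [h1] at hv1; linarith
    have e1 : k*q0 = k*p0 + k*a := by rw [hadef]; ring
    have e2 : k*s0 = k*p0 - k*b := by rw [hs0]; ring
    have e3 : k*(q0 + s0 - p0) = k*p0 + k*a - k*b := by rw [hs0, hadef]; ring
    exact main_ineq k s6 p0 p1 a b hk2 hk h62 h6 hab hPA
      (by linarith) (by linarith) (by linarith) (by linarith)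
      (by linarith [e1]) (by linarith [e3]) (by linarith [e2])
      (by linarith) (by linarith [e1]) (by linarith [e3]) (by linarith [e2])
  · -- σ = -1 : s = p + (b, -a) ; roles V2 = s, V3 = r, V4 = q with (a',b') = (b, -a)
    have hs0 : s0 = p0 + b := by rw [h1] at hv0; linarith
    have hs1 : s1 = p1 - a := by rw [h1] at hv1; linarith
    have hab' : b^2 + (-a)^2 = 1/2 := by linear_combination hab
    have e1 : k*q0 = k*p0 + k*a := by rw [hadef]; ring
    have e2 : k*s0 = k*p0 + k*b := by rw [hs0]; ring
    have e3 : k*(q0 + s0 - p0) = k*p0 + k*a + k*b := by rw [hs0, hadef]; ring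
    exact main_ineq k s6 p0 p1 b (-a) hk2 hk h62 h6 hab' hPA
      (by linarith) (by linarith) (by linarith)
      (by linarith) (by linarith [e2]) (by linarith [e3]) (by linarith [e1])
      (by linarith) (by linarith [e2]) (by linarith [e3]) (by linarith [e1])

lemma norm_to_sq (w : EuclideanSpace ℝ (Fin 2)) {c : ℝ} (h : ‖w‖ = c) :
    (w 0)^2 + (w 1)^2 = c^2 := by
  have h2 : ‖w‖^2 = c^2 := by rw [h]
  rw [EuclideanSpace.norm_eq, Real.sq_sqrt (by positivity)] at h2
  simpa [Fin.sum_univ_two, Real.norm_eq_abs, sq_abs] using h2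

theorem no_square_in_equilateral_triangle :
    let T : Set (EuclideanSpace ℝ (Fin 2)) :=
      convexHull ℝ
        {(WithLp.equiv 2 (Fin 2 → ℝ)).symm ![0, 0],
         (WithLp.equiv 2 (Fin 2 → ℝ)).symm ![Real.sqrt 2, 0],
         (WithLp.equiv 2 (Fin 2 → ℝ)).symm ![Real.sqrt 2 / 2, Real.sqrt 6 / 2]}
    ¬ ∃ p ∈ T, ∃ q ∈ T, ∃ r ∈ T, ∃ s ∈ T,
        ‖p - q‖ = Real.sqrt 2 / 2 ∧ ‖q - r‖ = Real.sqrt 2 / 2 ∧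
        ‖r - s‖ = Real.sqrt 2 / 2 ∧ ‖s - p‖ = Real.sqrt 2 / 2 ∧
        ‖p - r‖ = 1 ∧ ‖q - s‖ = 1 := by
  intro T
  rintro ⟨p, hp, q, hq, r, hr, s, hs, n1, n2, n3, n4, n5, n6⟩
  have h2 : Real.sqrt 2 ^ 2 = 2 := Real.sq_sqrt (by norm_num)
  have h3 : Real.sqrt 3 ^ 2 = 3 := Real.sq_sqrt (by norm_num)
  have h6sq : Real.sqrt 6 ^ 2 = 6 := Real.sq_sqrt (by norm_num)
  have h3pos : (0:ℝ) < Real.sqrt 3 := Real.sqrt_pos.2 (by norm_num)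
  have h6pos : (0:ℝ) < Real.sqrt 6 := Real.sqrt_pos.2 (by norm_num)
  have h32 : Real.sqrt 6 = Real.sqrt 3 * Real.sqrt 2 := by
    rw [← Real.sqrt_mul (by norm_num : (0:ℝ) ≤ 3)]; norm_num
  have h2pos : (0:ℝ) ≤ Real.sqrt 2 := Real.sqrt_nonneg 2
  -- halfplane inclusions
  have lin1 : IsLinearMap ℝ (fun z : EuclideanSpace ℝ (Fin 2) => z 1) :=
    ⟨fun u v => rfl, fun c u => rfl⟩
  have lin2 : IsLinearMap ℝ (fun z : EuclideanSpace ℝ (Fin 2) =>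
      Real.sqrt 3 * z 0 - z 1) := by
    constructor
    · intro u v
      show Real.sqrt 3 * (u 0 + v 0) - (u 1 + v 1) = _
      ring
    · intro c u
      show Real.sqrt 3 * (c * u 0) - c * u 1 = c * (Real.sqrt 3 * u 0 - u 1)
      ring
  have lin3 : IsLinearMap ℝ (fun z : EuclideanSpace ℝ (Fin 2) =>
      Real.sqrt 3 * z 0 + z 1) := by
    constructor
    · intro u v
      show Real.sqrt 3 * (u 0 + v 0) + (u 1 + v 1) = _
      ring
    · intro c u
      show Real.sqrt 3 * (c * u 0) + c * u 1 = c * (Real.sqrt 3 * u 0 + u 1)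
      ring
  have hsub1 : T ⊆ {z : EuclideanSpace ℝ (Fin 2) | 0 ≤ z 1} := by
    apply convexHull_min _ (convex_halfSpace_ge lin1 0)
    rintro z (rfl | rfl | rfl) <;>
      simp [Set.mem_setOf_eq, WithLp.equiv_symm_apply, PiLp.toLp_apply] <;> positivity
  have hsub2 : T ⊆ {z : EuclideanSpace ℝ (Fin 2) | 0 ≤ Real.sqrt 3 * z 0 - z 1} := by
    apply convexHull_min _ (convex_halfSpace_ge lin2 0)
    rintro z (rfl | rfl | rfl) <;>
      simp [Set.mem_setOf_eq, WithLp.equiv_symm_apply, PiLp.toLp_apply] <;>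
      nlinarith [h32, h3pos, h2pos, mul_nonneg h3pos.le h2pos]
  have hsub3 : T ⊆ {z : EuclideanSpace ℝ (Fin 2) |
      Real.sqrt 3 * z 0 + z 1 ≤ Real.sqrt 6} := by
    apply convexHull_min _ (convex_halfSpace_le lin3 (Real.sqrt 6))
    rintro z (rfl | rfl | rfl) <;>
      simp [Set.mem_setOf_eq, WithLp.equiv_symm_apply, PiLp.toLp_apply] <;>
      nlinarith [h32, h3pos, h2pos, h6pos, mul_nonneg h3pos.le h2pos]
  have hc : (Real.sqrt 2 / 2)^2 = 1/2 := by rw [div_pow, h2]; norm_num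
  have E1 := norm_to_sq _ n1; have E2 := norm_to_sq _ n2
  have E3 := norm_to_sq _ n3; have E4 := norm_to_sq _ n4
  have E5 := norm_to_sq _ n5; have E6 := norm_to_sq _ n6
  rw [hc] at E1 E2 E3 E4
  rw [one_pow] at E5 E6
  have hsub : ∀ (u v : EuclideanSpace ℝ (Fin 2)) (i : Fin 2),
      (u - v) i = u i - v i := fun _ _ _ => rfl
  simp only [hsub] at E1 E2 E3 E4 E5 E6
  exact master_s19 (Real.sqrt 3) (Real.sqrt 6) (p 0) (p 1) (q 0) (q 1) (r 0) (r 1)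
    (s 0) (s 1) h3 h3pos h6sq h6pos E1 E2 E3 E4 E5 E6
    (by have := hsub1 hp; simpa using this) (by have := hsub2 hp; simp only [Set.mem_setOf_eq] at this; linarith) (by have := hsub3 hp; simpa using this)
    (by have := hsub1 hq; simpa using this) (by have := hsub2 hq; simp only [Set.mem_setOf_eq] at this; linarith) (by have := hsub3 hq; simpa using this)
    (by have := hsub1 hr; simpa using this) (by have := hsub2 hr; simp only [Set.mem_setOf_eq] at this; linarith) (by have := hsub3 hr; simpa using this)
    (by have := hsub1 hs; simpa using this) (by have := hsub2 hs; simp only [Set.mem_setOf_eq] at this; linarith) (by have := hsub3 hs; simpa using this)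
end
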